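/- arXiv:2310.09973 — 3 statements merged into one kernel-verified Lean document; each statement's English description precedes it below -/
import Mathlib

section
/- Let G and H be Class 1 simple graphs, each with at least one edge, with maximum degrees Δ(G) and Δ(H). Let φ be a partial proper edge coloring of the Cartesian product G □ H defined on a set E₀ of edges using at most Δ(G) + Δ(H) colors, such that any two distinct edges of E₀ are at distance at least 4 in G □ H. Then φ extends to a proper edge coloring of G □ H using Δ(G) + Δ(H) colors. -/
open SimpleGraph
open scoped Classical

/-- A (total) edge coloring `c` with `n` colors is proper on the edge set `E₀ ⊆ G.edgeSet`:
any two distinct edges of `E₀` sharing a vertex receive different colors. -/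
def IsProperEdgeColoringOn {V : Type*} (G : SimpleGraph V) (E₀ : Set (Sym2 V)) {n : ℕ}
    (c : Sym2 V → Fin n) : Prop :=
  E₀ ⊆ G.edgeSet ∧
    ∀ e ∈ E₀, ∀ f ∈ E₀, e ≠ f → (∃ v, v ∈ e ∧ v ∈ f) → c e ≠ c f

/-- A proper edge coloring of `G` with `n` colors: any two distinct edges of `G`
sharing a vertex receive different colors. -/
def IsProperEdgeColoring {V : Type*} (G : SimpleGraph V) {n : ℕ} (c : Sym2 V → Fin n) : Prop :=
  ∀ e ∈ G.edgeSet, ∀ f ∈ G.edgeSet, e ≠ f → (∃ v, v ∈ e ∧ v ∈ f) → c e ≠ c f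

/-- The distance between edges `e` and `f` of `G` is at least `k`:
every endpoint of `e` is at (extended) graph distance at least `k` from every endpoint of `f`. -/
def EdgeDistGE {V : Type*} (G : SimpleGraph V) (e f : Sym2 V) (k : ℕ) : Prop :=
  ∀ x ∈ e, ∀ y ∈ f, (k : ℕ∞) ≤ G.edist x y

/-- The chromatic index of `G`: the least `n` such that `G` admits a proper edge coloring
with `n` colors. -/
noncomputable def chromIndex {V : Type*} (G : SimpleGraph V) : ℕ :=
  sInf {n | ∃ c : Sym2 V → Fin n, IsProperEdgeColoring G c}

/-- A finite graph is Class 1 if its chromatic index equals its maximum degree. -/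
def IsClassOne {V : Type*} [Fintype V] (G : SimpleGraph V) : Prop :=
  chromIndex G = G.maxDegree

/-- The iterated Cartesian (box) product of the family of graphs `G i`. -/
def boxProdPi {ι : Type*} {V : ι → Type*} (G : ∀ i, SimpleGraph (V i)) :
    SimpleGraph (∀ i, V i) where
  Adj x y := ∃ i, (G i).Adj (x i) (y i) ∧ ∀ j, j ≠ i → x j = y j
  symm := ⟨fun x y ⟨i, ha, he⟩ => ⟨i, ha.symm, fun j hj => (he j hj).symm⟩⟩
  loopless := ⟨fun x ⟨i, ha, _⟩ => (G i).loopless.irrefl _ ha⟩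

/-- The `d`-fold iterated Cartesian (box) product of `G` with itself. -/
def boxPow {V : Type*} (G : SimpleGraph V) (d : ℕ) : SimpleGraph (Fin d → V) :=
  boxProdPi fun _ => G

namespace Ext11

variable {α β FG FH C : Type*}

/-- unordered pair matcher -/
def S (p q c d : α × β) : Prop := (p = c ∧ q = d) ∨ (p = d ∧ q = c)

lemma S_swap {p q c d : α × β} (h : S p q c d) : S q p c d :=
  h.elim (fun ⟨h1, h2⟩ => Or.inr ⟨h2, h1⟩) (fun ⟨h1, h2⟩ => Or.inl ⟨h2, h1⟩)

lemma S_comm (p q c d : α × β) : S p q c d = S q p c d := propext ⟨S_swap, S_swap⟩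

lemma S_rfl (c d : α × β) : S c d c d := Or.inl ⟨rfl, rfl⟩

lemma not_S {p q c d : α × β} (h1 : p ≠ c) (h2 : p ≠ d) : ¬ S p q c d := by
  rintro (⟨h, -⟩ | ⟨h, -⟩)
  exacts [h1 h, h2 h]

lemma not_S' {p q c d : α × β} (h1 : q ≠ c) (h2 : q ≠ d) : ¬ S p q c d :=
  fun h => not_S h1 h2 (S_swap h)

lemma S_resolve {p q c d : α × β} (h : S p q c d) (h1 : p = c) (h2 : c ≠ d) : q = d := by
  rcases h with ⟨-, h⟩ | ⟨h3, -⟩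
  · exact h
  · exact absurd (h1 ▸ h3) h2

/-- if both match two unordered pairs, the pairs coincide -/
lemma S_funct {p q c d c' d' : α × β} (h : S p q c d) (h' : S p q c' d') :
    (c = c' ∧ d = d') ∨ (c = d' ∧ d = c') := by
  rcases h with ⟨h1, h2⟩ | ⟨h1, h2⟩ <;> rcases h' with ⟨h3, h4⟩ | ⟨h3, h4⟩
  · exact Or.inl ⟨h1 ▸ h3, h2 ▸ h4⟩
  · exact Or.inr ⟨h1 ▸ h3, h2 ▸ h4⟩
  · exact Or.inr ⟨h2 ▸ h4, h1 ▸ h3⟩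
  · exact Or.inl ⟨h2 ▸ h4, h1 ▸ h3⟩

lemma pne_fst {x y : α} {s t : β} (h : x ≠ y) : (x, s) ≠ (y, t) := by
  intro h'; exact h (congrArg Prod.fst h')

lemma pne_snd {x y : α} {s t : β} (h : s ≠ t) : (x, s) ≠ (y, t) := by
  intro h'; exact h (congrArg Prod.snd h')

variable (G : SimpleGraph α) (H : SimpleGraph β)
variable (cG : α → α → FG) (cH : β → β → FH) (ι : FG → C) (η : FH → C)

/-- hypothesis bundle -/
structure Good : Prop where
  iinj : Function.Injective ι
  einj : Function.Injective η
  disj : ∀ x y, ι x ≠ η y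
  gsym : ∀ x y, cG x y = cG y x
  gprop : ∀ v x y, G.Adj v x → G.Adj v y → x ≠ y → cG v x ≠ cG v y
  hsym : ∀ x y, cH x y = cH y x
  hprop : ∀ v x y, H.Adj v x → H.Adj v y → x ≠ y → cH v x ≠ cH v y

variable {G H cG cH ι η}

lemma Good.guniq (hg : Good G H cG cH ι η) {v x y : α} (hx : G.Adj v x) (hy : G.Adj v y)
    (h : cG v x = cG v y) : x = y := by
  by_contra hne; exact hg.gprop v x y hx hy hne h

lemma Good.huniq (hg : Good G H cG cH ι η) {v x y : β} (hx : H.Adj v x) (hy : H.Adj v y)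
    (h : cH v x = cH v y) : x = y := by
  by_contra hne; exact hg.hprop v x y hx hy hne h

variable (G H cG cH ι η)

/-- the base product coloring, as a function on ordered pairs -/
noncomputable def bc (p q : α × β) : C := if p.2 = q.2 then ι (cG p.1 q.1) else η (cH p.2 q.2)

/-- pairwise properness of a pair coloring -/
def PProp (f : α × β → α × β → C) : Prop :=
  ∀ z x y, (G □ H).Adj z x → (G □ H).Adj z y → x ≠ y → f z x ≠ f z y

variable {G H cG cH ι η}

lemma bc_G {p q : α × β} (h : p.2 = q.2) : bc cG cH ι η p q = ι (cG p.1 q.1) := if_pos h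

lemma bc_H {p q : α × β} (h : p.2 ≠ q.2) : bc cG cH ι η p q = η (cH p.2 q.2) := if_neg h

lemma bc_symm (hg : Good G H cG cH ι η) (p q : α × β) :
    bc cG cH ι η p q = bc cG cH ι η q p := by
  unfold bc
  by_cases h : p.2 = q.2
  · rw [if_pos h, if_pos h.symm, hg.gsym]
  · rw [if_neg h, if_neg (Ne.symm h), hg.hsym]

lemma bc_proper (hg : Good G H cG cH ι η) : PProp G H (bc cG cH ι η (C := C)) := by
  rintro z x y hx hy hne
  rw [boxProd_adj] at hx hy
  rcases hx with ⟨hxg, hxe⟩ | ⟨hxh, hxe⟩ <;> rcases hy with ⟨hyg, hye⟩ | ⟨hyh, hye⟩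
  · rw [bc_G hxe, bc_G hye]
    intro h
    apply hg.gprop z.1 x.1 y.1 hxg hyg _ (hg.iinj h)
    intro h1
    exact hne (Prod.ext h1 (hxe.symm.trans hye))
  · rw [bc_G hxe, bc_H hyh.ne]
    exact hg.disj _ _
  · rw [bc_H hxh.ne, bc_G hye]
    exact fun h => hg.disj _ _ h.symm
  · rw [bc_H hxh.ne, bc_H hyh.ne]
    intro h
    apply hg.hprop z.2 x.2 y.2 hxh hyh _ (hg.einj h)
    intro h2
    exact hne (Prod.ext (hxe.symm.trans hye) h2)

/-! ### per-vertex properness helpers -/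

section AtVertex

variable {V D : Type*} {K : SimpleGraph V}

lemma at2 (f g : V → D) (z n1 n2 : V) (c1 c2 : D)
    (h1 : f n1 = c1) (h2 : f n2 = c2)
    (hbase : ∀ x, K.Adj z x → x ≠ n1 → x ≠ n2 → f x = g x)
    (hb1 : ∀ x, K.Adj z x → x ≠ n1 → x ≠ n2 → g x ≠ c1)
    (hb2 : ∀ x, K.Adj z x → x ≠ n1 → x ≠ n2 → g x ≠ c2)
    (hgg : ∀ x y, K.Adj z x → K.Adj z y → x ≠ y → g x ≠ g y)
    (hc12 : c1 ≠ c2) :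
    ∀ x y, K.Adj z x → K.Adj z y → x ≠ y → f x ≠ f y := by
  have cls : ∀ x, K.Adj z x → (x = n1 ∧ f x = c1) ∨ (x = n2 ∧ f x = c2) ∨
      (x ≠ n1 ∧ x ≠ n2 ∧ f x = g x ∧ g x ≠ c1 ∧ g x ≠ c2) := by
    intro x hx
    by_cases e1 : x = n1
    · exact Or.inl ⟨e1, e1 ▸ h1⟩
    by_cases e2 : x = n2
    · exact Or.inr (Or.inl ⟨e2, e2 ▸ h2⟩)
    · exact Or.inr (Or.inr ⟨e1, e2, hbase x hx e1 e2, hb1 x hx e1 e2, hb2 x hx e1 e2⟩)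
  intro x y hx hy hne
  rcases cls x hx with ⟨rfl, hfx⟩ | ⟨rfl, hfx⟩ | ⟨ex1, ex2, hfx, hgx1, hgx2⟩ <;>
    rcases cls y hy with ⟨rfl, hfy⟩ | ⟨rfl, hfy⟩ | ⟨ey1, ey2, hfy, hgy1, hgy2⟩ <;>
    (try rw [hfx]) <;> (try rw [hfy]) <;>
    first
      | exact absurd rfl hne
      | assumption
      | exact Ne.symm (by assumption)
      | exact hgg _ _ hx hy hne

lemma at3 (f g : V → D) (z n1 n2 n3 : V) (c1 c2 c3 : D)
    (h1 : f n1 = c1) (h2 : f n2 = c2) (h3 : f n3 = c3)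
    (hbase : ∀ x, K.Adj z x → x ≠ n1 → x ≠ n2 → x ≠ n3 → f x = g x)
    (hb1 : ∀ x, K.Adj z x → x ≠ n1 → x ≠ n2 → x ≠ n3 → g x ≠ c1)
    (hb2 : ∀ x, K.Adj z x → x ≠ n1 → x ≠ n2 → x ≠ n3 → g x ≠ c2)
    (hb3 : ∀ x, K.Adj z x → x ≠ n1 → x ≠ n2 → x ≠ n3 → g x ≠ c3)
    (hgg : ∀ x y, K.Adj z x → K.Adj z y → x ≠ y → g x ≠ g y)
    (hc12 : c1 ≠ c2) (hc13 : c1 ≠ c3) (hc23 : c2 ≠ c3) :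
    ∀ x y, K.Adj z x → K.Adj z y → x ≠ y → f x ≠ f y := by
  have cls : ∀ x, K.Adj z x → (x = n1 ∧ f x = c1) ∨ (x = n2 ∧ f x = c2) ∨ (x = n3 ∧ f x = c3) ∨
      (x ≠ n1 ∧ x ≠ n2 ∧ x ≠ n3 ∧ f x = g x ∧ g x ≠ c1 ∧ g x ≠ c2 ∧ g x ≠ c3) := by
    intro x hx
    by_cases e1 : x = n1
    · exact Or.inl ⟨e1, e1 ▸ h1⟩
    by_cases e2 : x = n2
    · exact Or.inr (Or.inl ⟨e2, e2 ▸ h2⟩)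
    by_cases e3 : x = n3
    · exact Or.inr (Or.inr (Or.inl ⟨e3, e3 ▸ h3⟩))
    · exact Or.inr (Or.inr (Or.inr ⟨e1, e2, e3, hbase x hx e1 e2 e3, hb1 x hx e1 e2 e3,
        hb2 x hx e1 e2 e3, hb3 x hx e1 e2 e3⟩))
  intro x y hx hy hne
  rcases cls x hx with ⟨rfl, hfx⟩ | ⟨rfl, hfx⟩ | ⟨rfl, hfx⟩ | ⟨ex1, ex2, ex3, hfx, hgx1, hgx2, hgx3⟩ <;>
    rcases cls y hy with ⟨rfl, hfy⟩ | ⟨rfl, hfy⟩ | ⟨rfl, hfy⟩ | ⟨ey1, ey2, ey3, hfy, hgy1, hgy2, hgy3⟩ <;>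
    (try rw [hfx]) <;> (try rw [hfy]) <;>
    first
      | exact absurd rfl hne
      | assumption
      | exact Ne.symm (by assumption)
      | exact hgg _ _ hx hy hne

lemma at1 (f g : V → D) (z n1 : V) (c1 : D)
    (h1 : f n1 = c1)
    (hbase : ∀ x, K.Adj z x → x ≠ n1 → f x = g x)
    (hb1 : ∀ x, K.Adj z x → x ≠ n1 → g x ≠ c1)
    (hgg : ∀ x y, K.Adj z x → K.Adj z y → x ≠ y → g x ≠ g y) :
    ∀ x y, K.Adj z x → K.Adj z y → x ≠ y → f x ≠ f y := by
  have cls : ∀ x, K.Adj z x → (x = n1 ∧ f x = c1) ∨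
      (x ≠ n1 ∧ f x = g x ∧ g x ≠ c1) := by
    intro x hx
    by_cases e1 : x = n1
    · exact Or.inl ⟨e1, e1 ▸ h1⟩
    · exact Or.inr ⟨e1, hbase x hx e1, hb1 x hx e1⟩
  intro x y hx hy hne
  rcases cls x hx with ⟨rfl, hfx⟩ | ⟨ex1, hfx, hgx1⟩ <;>
    rcases cls y hy with ⟨rfl, hfy⟩ | ⟨ey1, hfy, hgy1⟩ <;>
    (try rw [hfx]) <;> (try rw [hfy]) <;>
    first
      | exact absurd rfl hne
      | assumption
      | exact Ne.symm (by assumption)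
      | exact hgg _ _ hx hy hne

end AtVertex

/-! ### the output interface of a local recoloring -/

variable (G H) in
/-- `w` is within distance 1 of the edge `uv`. -/
def W1 (u v w : α × β) : Prop := w = u ∨ w = v ∨ (G □ H).Adj u w ∨ (G □ H).Adj v w

variable (G H cG ι) in
/-- far-vertex description, `G`-colored vertical edge shape -/
def SH (u v : α × β) (w : α × β) (c : C) : Prop :=
  ∃ x₀ y₀, ((x₀, y₀) = u ∨ (x₀, y₀) = v) ∧ G.Adj x₀ w.1 ∧ H.Adj y₀ w.2 ∧ c = ι (cG x₀ w.1)

variable (G H cH η) in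
/-- far-vertex description, `H`-colored horizontal edge shape -/
def SG' (u v : α × β) (w : α × β) (c : C) : Prop :=
  ∃ x₀ y₀, ((x₀, y₀) = u ∨ (x₀, y₀) = v) ∧ G.Adj x₀ w.1 ∧ H.Adj y₀ w.2 ∧ c = η (cH y₀ w.2)

variable (G H cG cH ι η) in
/-- everything the gluing argument needs from a local recoloring around the edge `uv`. -/
def Out (u v : α × β) (t : C) (val : α × β → α × β → C) : Prop :=
  (∀ p q, val p q = val q p) ∧ PProp G H val ∧ val u v = t ∧
    ∀ p q, val p q ≠ bc cG cH ι η p q →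
      (G □ H).Adj p q ∧ (∃ w, (w = p ∨ w = q) ∧ W1 G H u v w) ∧
        ∀ w, w = p ∨ w = q →
          W1 G H u v w ∨ SH G H cG ι u v w (val p q) ∨ SG' G H cH η u v w (val p q)

lemma W1_left (u v : α × β) : W1 G H u v u := Or.inl rfl
lemma W1_right (u v : α × β) : W1 G H u v v := Or.inr (Or.inl rfl)

/-! ### helpers for refuting pair-matches -/

lemma S_resolve' {p q c d : α × β} (h : S p q c d) (h1 : p = d) (h2 : c ≠ d) : q = c := by
  rcases h with ⟨h3, -⟩ | ⟨-, h3⟩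
  · exact absurd (h1 ▸ h3).symm h2
  · exact h3

lemma S_discr {p q c d c' d' : α × β} (h : S p q c d) (h1 : c ≠ c') (h2 : c ≠ d') :
    ¬ S p q c' d' := fun h' => (S_funct h h').elim (fun x => h1 x.1) (fun x => h2 x.1)

lemma S_discr' {p q c d c' d' : α × β} (h : S p q c d) (h1 : d ≠ d') (h2 : d ≠ c') :
    ¬ S p q c' d' := fun h' => (S_funct h h').elim (fun x => h1 x.2) (fun x => h2 x.2)

section Schemes

variable {G : SimpleGraph α} {H : SimpleGraph β} {cG : α → α → FG} {cH : β → β → FH}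
  {ι : FG → C} {η : FH → C}

/-- trivial scheme: the target color is already the base color -/
theorem schemeT (hg : Good G H cG cH ι η) {a a' : α} {b : β} (hA : G.Adj a a') :
    ∃ val, Out G H cG cH ι η (a, b) (a', b) (ι (cG a a')) val :=
  ⟨bc cG cH ι η, fun p q => bc_symm hg p q, bc_proper hg, bc_G rfl,
    fun _ _ hne => absurd rfl hne⟩

/-- scheme B0 : `G`-type edge, `H`-type target color not present at `b` -/
theorem schemeB0 (hg : Good G H cG cH ι η) {a a' : α} {b : β} (hA : G.Adj a a')
    (t'' : FH) (h0 : ∀ y, H.Adj b y → cH b y ≠ t'') :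
    ∃ val, Out G H cG cH ι η (a, b) (a', b) (η t'') val := by
  classical
  have haa' : a ≠ a' := hA.ne
  set val : (α × β) → (α × β) → C := fun p q =>
    if S p q (a, b) (a', b) then η t'' else bc cG cH ι η p q with hval
  have ev1 : ∀ p q, S p q (a, b) (a', b) → val p q = η t'' := by
    intro p q h; simp only [hval]; rw [if_pos h]
  have evb : ∀ p q, ¬ S p q (a, b) (a', b) → val p q = bc cG cH ι η p q := by
    intro p q h; simp only [hval]; rw [if_neg h]
  have hbc_t : ∀ (z : α × β), z.2 = b → ∀ x, (G □ H).Adj z x →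
      bc cG cH ι η z x ≠ η t'' := by
    intro z hz x hx
    rw [boxProd_adj] at hx
    rcases hx with ⟨hxg, hxe⟩ | ⟨hxh, hxe⟩
    · rw [bc_G hxe]; exact hg.disj _ _
    · rw [bc_H hxh.ne]
      intro h
      exact h0 x.2 (hz ▸ hxh) (hz ▸ hg.einj h)
  refine ⟨val, ?_, ?_, ev1 _ _ (S_rfl _ _), ?_⟩
  · intro p q
    simp only [hval, S_comm p q, bc_symm hg p q]
  · -- properness
    intro z x y hzx hzy hxy
    by_cases hz1 : z = (a, b)
    · subst hz1
      refine at1 (K := G □ H) (val (a, b)) (bc cG cH ι η (a, b)) (a, b) (a', b)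
        (η t'') (ev1 _ _ (S_rfl _ _)) ?_ ?_
        (fun x y hx hy hne => bc_proper hg (a, b) x y hx hy hne) x y hzx hzy hxy
      · intro x hx hx1
        refine evb _ _ ?_
        rintro (⟨-, h⟩ | ⟨h, -⟩)
        · exact hx1 h
        · exact pne_fst haa' h
      · intro x hx hx1
        exact hbc_t (a, b) rfl x hx
    by_cases hz2 : z = (a', b)
    · subst hz2
      refine at1 (K := G □ H) (val (a', b)) (bc cG cH ι η (a', b)) (a', b) (a, b)
        (η t'') (ev1 _ _ (S_swap (S_rfl _ _))) ?_ ?_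
        (fun x y hx hy hne => bc_proper hg (a', b) x y hx hy hne) x y hzx hzy hxy
      · intro x hx hx1
        refine evb _ _ ?_
        rintro (⟨h, -⟩ | ⟨-, h⟩)
        · exact pne_fst haa'.symm h
        · exact hx1 h
      · intro x hx hx1
        exact hbc_t (a', b) rfl x hx
    · have hfar : ∀ x, val z x = bc cG cH ι η z x :=
        fun x => evb _ _ (not_S hz1 hz2)
      rw [hfar x, hfar y]
      exact bc_proper hg z x y hzx hzy hxy
  · -- description
    intro p q hne
    by_cases h1 : S p q (a, b) (a', b)
    · have hW : ∀ w, w = p ∨ w = q → W1 G H (a, b) (a', b) w := by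
        rcases h1 with ⟨rfl, rfl⟩ | ⟨rfl, rfl⟩ <;> rintro w (rfl | rfl) <;>
          first
            | exact Or.inl rfl
            | exact Or.inr (Or.inl rfl)
      have hadj : (G □ H).Adj p q := by
        rcases h1 with ⟨rfl, rfl⟩ | ⟨rfl, rfl⟩
        · exact boxProd_adj_left.mpr hA
        · exact (boxProd_adj_left.mpr hA).symm
      exact ⟨hadj, ⟨p, Or.inl rfl, hW p (Or.inl rfl)⟩, fun w hw => Or.inl (hW w hw)⟩
    · exact absurd (evb _ _ h1) hne

/-- scheme B1 : `G`-type edge, `H`-type target color present at `b` via `b1`;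
square rotation on `{a,a'} × {b,b1}`. -/
theorem schemeB1 (hg : Good G H cG cH ι η) {a a' : α} {b b1 : β} (hA : G.Adj a a')
    (hb1 : H.Adj b b1) (t'' : FH) (hc : cH b b1 = t'')
    (hu : ∀ y, H.Adj b y → cH b y = t'' → y = b1) :
    ∃ val, Out G H cG cH ι η (a, b) (a', b) (η t'') val := by
  classical
  have haa' : a ≠ a' := hA.ne
  have hbb1 : b ≠ b1 := hb1.ne
  have nuv : ((a, b) : α × β) ≠ (a', b) := pne_fst haa'
  have nuw : ((a, b) : α × β) ≠ (a, b1) := pne_snd hbb1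
  have nuw' : ((a, b) : α × β) ≠ (a', b1) := pne_fst haa'
  have nvw : ((a', b) : α × β) ≠ (a, b1) := pne_fst haa'.symm
  have nvw' : ((a', b) : α × β) ≠ (a', b1) := pne_snd hbb1
  have nww' : ((a, b1) : α × β) ≠ (a', b1) := pne_fst haa'
  have hcb1 : cH b1 b = t'' := (hg.hsym b1 b).trans hc
  have hub1 : ∀ y, H.Adj b1 y → cH b1 y = t'' → y = b := by
    intro y hy h
    exact hg.huniq hy hb1.symm (h.trans hcb1.symm)
  set val : (α × β) → (α × β) → C := fun p q =>
    if S p q (a, b) (a', b) then η t''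
    else if S p q (a, b) (a, b1) then ι (cG a a')
    else if S p q (a', b) (a', b1) then ι (cG a a')
    else if S p q (a, b1) (a', b1) then η t''
    else bc cG cH ι η p q with hval
  have ev1 : ∀ p q, S p q (a, b) (a', b) → val p q = η t'' := by
    intro p q h; simp only [hval]; rw [if_pos h]
  have ev2 : ∀ p q, S p q (a, b) (a, b1) → val p q = ι (cG a a') := by
    intro p q h; simp only [hval]
    rw [if_neg (S_discr' h nvw.symm nuw.symm), if_pos h]
  have ev3 : ∀ p q, S p q (a', b) (a', b1) → val p q = ι (cG a a') := by
    intro p q h; simp only [hval]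
    rw [if_neg (S_discr' h nvw'.symm nuw'.symm), if_neg (S_discr h nuv.symm nvw),
      if_pos h]
  have ev4 : ∀ p q, S p q (a, b1) (a', b1) → val p q = η t'' := by
    intro p q h; simp only [hval]
    rw [if_neg (S_discr h nuw.symm nvw.symm), if_neg (S_discr' h nww'.symm nuw'.symm),
      if_neg (S_discr h nvw.symm nww'), if_pos h]
  have evb : ∀ p q, ¬ S p q (a, b) (a', b) → ¬ S p q (a, b) (a, b1) →
      ¬ S p q (a', b) (a', b1) → ¬ S p q (a, b1) (a', b1) →
      val p q = bc cG cH ι η p q := by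
    intro p q h1 h2 h3 h4; simp only [hval]
    rw [if_neg h1, if_neg h2, if_neg h3, if_neg h4]
  -- base color exclusions at the four touched vertices
  have hbcu_t : ∀ x, (G □ H).Adj (a, b) x → x ≠ (a', b) → x ≠ (a, b1) →
      bc cG cH ι η (a, b) x ≠ η t'' := by
    intro x hx hxv hxw
    rw [boxProd_adj] at hx
    rcases hx with ⟨hxg, hxe⟩ | ⟨hxh, hxe⟩
    · rw [bc_G hxe]; exact hg.disj _ _
    · rw [bc_H hxh.ne]
      intro h
      exact hxw (Prod.ext hxe.symm (hu x.2 hxh (hg.einj h)))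
  have hbcu_s : ∀ x, (G □ H).Adj (a, b) x → x ≠ (a', b) → x ≠ (a, b1) →
      bc cG cH ι η (a, b) x ≠ ι (cG a a') := by
    intro x hx hxv hxw
    rw [boxProd_adj] at hx
    rcases hx with ⟨hxg, hxe⟩ | ⟨hxh, hxe⟩
    · rw [bc_G hxe]
      intro h
      exact hxv (Prod.ext (hg.guniq hxg hA (hg.iinj h)) hxe.symm)
    · rw [bc_H hxh.ne]
      exact fun h => hg.disj _ _ h.symm
  have hbcv_t : ∀ x, (G □ H).Adj (a', b) x → x ≠ (a, b) → x ≠ (a', b1) →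
      bc cG cH ι η (a', b) x ≠ η t'' := by
    intro x hx hxu hxw
    rw [boxProd_adj] at hx
    rcases hx with ⟨hxg, hxe⟩ | ⟨hxh, hxe⟩
    · rw [bc_G hxe]; exact hg.disj _ _
    · rw [bc_H hxh.ne]
      intro h
      exact hxw (Prod.ext hxe.symm (hu x.2 hxh (hg.einj h)))
  have hbcv_s : ∀ x, (G □ H).Adj (a', b) x → x ≠ (a, b) → x ≠ (a', b1) →
      bc cG cH ι η (a', b) x ≠ ι (cG a a') := by
    intro x hx hxu hxw
    rw [boxProd_adj] at hx
    rcases hx with ⟨hxg, hxe⟩ | ⟨hxh, hxe⟩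
    · rw [bc_G hxe]
      intro h
      refine hxu (Prod.ext (hg.guniq hxg hA.symm ?_) hxe.symm)
      rw [hg.iinj h, hg.gsym]
    · rw [bc_H hxh.ne]
      exact fun h => hg.disj _ _ h.symm
  have hbcw_t : ∀ x, (G □ H).Adj (a, b1) x → x ≠ (a, b) → x ≠ (a', b1) →
      bc cG cH ι η (a, b1) x ≠ η t'' := by
    intro x hx hxu hxw
    rw [boxProd_adj] at hx
    rcases hx with ⟨hxg, hxe⟩ | ⟨hxh, hxe⟩
    · rw [bc_G hxe]; exact hg.disj _ _
    · rw [bc_H hxh.ne]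
      intro h
      exact hxu (Prod.ext hxe.symm (hub1 x.2 hxh (hg.einj h)))
  have hbcw_s : ∀ x, (G □ H).Adj (a, b1) x → x ≠ (a, b) → x ≠ (a', b1) →
      bc cG cH ι η (a, b1) x ≠ ι (cG a a') := by
    intro x hx hxu hxw
    rw [boxProd_adj] at hx
    rcases hx with ⟨hxg, hxe⟩ | ⟨hxh, hxe⟩
    · rw [bc_G hxe]
      intro h
      exact hxw (Prod.ext (hg.guniq hxg hA (hg.iinj h)) hxe.symm)
    · rw [bc_H hxh.ne]
      exact fun h => hg.disj _ _ h.symm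
  have hbcw'_t : ∀ x, (G □ H).Adj (a', b1) x → x ≠ (a', b) → x ≠ (a, b1) →
      bc cG cH ι η (a', b1) x ≠ η t'' := by
    intro x hx hxv hxw
    rw [boxProd_adj] at hx
    rcases hx with ⟨hxg, hxe⟩ | ⟨hxh, hxe⟩
    · rw [bc_G hxe]; exact hg.disj _ _
    · rw [bc_H hxh.ne]
      intro h
      exact hxv (Prod.ext hxe.symm (hub1 x.2 hxh (hg.einj h)))
  have hbcw'_s : ∀ x, (G □ H).Adj (a', b1) x → x ≠ (a', b) → x ≠ (a, b1) →
      bc cG cH ι η (a', b1) x ≠ ι (cG a a') := by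
    intro x hx hxv hxw
    rw [boxProd_adj] at hx
    rcases hx with ⟨hxg, hxe⟩ | ⟨hxh, hxe⟩
    · rw [bc_G hxe]
      intro h
      refine hxw (Prod.ext (hg.guniq hxg hA.symm ?_) hxe.symm)
      rw [hg.iinj h, hg.gsym]
    · rw [bc_H hxh.ne]
      exact fun h => hg.disj _ _ h.symm
  refine ⟨val, ?_, ?_, ev1 _ _ (S_rfl _ _), ?_⟩
  · intro p q
    simp only [hval, S_comm p q, bc_symm hg p q]
  · -- properness
    intro z x y hzx hzy hxy
    by_cases hz1 : z = (a, b)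
    · subst hz1
      refine at2 (K := G □ H) (val (a, b)) (bc cG cH ι η (a, b)) (a, b) (a', b) (a, b1)
        (η t'') (ι (cG a a')) (ev1 _ _ (S_rfl _ _)) (ev2 _ _ (S_rfl _ _)) ?_
        (hbcu_t) (hbcu_s)
        (fun x y hx hy hne => bc_proper hg (a, b) x y hx hy hne)
        (fun h => hg.disj _ _ h.symm) x y hzx hzy hxy
      intro x hx hx1 hx2
      refine evb _ _ ?_ ?_ ?_ ?_
      · rintro (⟨-, h⟩ | ⟨h, -⟩)
        exacts [hx1 h, nuv h]
      · rintro (⟨-, h⟩ | ⟨h, -⟩)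
        exacts [hx2 h, nuw h]
      · exact not_S nuv nuw'
      · exact not_S nuw nuw'
    by_cases hz2 : z = (a', b)
    · subst hz2
      refine at2 (K := G □ H) (val (a', b)) (bc cG cH ι η (a', b)) (a', b) (a, b) (a', b1)
        (η t'') (ι (cG a a')) (ev1 _ _ (S_swap (S_rfl _ _))) (ev3 _ _ (S_rfl _ _)) ?_
        (hbcv_t) (hbcv_s)
        (fun x y hx hy hne => bc_proper hg (a', b) x y hx hy hne)
        (fun h => hg.disj _ _ h.symm) x y hzx hzy hxy
      intro x hx hx1 hx2
      refine evb _ _ ?_ ?_ ?_ ?_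
      · rintro (⟨h, -⟩ | ⟨-, h⟩)
        exacts [nuv h.symm, hx1 h]
      · exact not_S (fun h => nuv h.symm) nvw
      · rintro (⟨-, h⟩ | ⟨h, -⟩)
        exacts [hx2 h, nvw' h]
      · exact not_S nvw nvw'
    by_cases hz3 : z = (a, b1)
    · subst hz3
      refine at2 (K := G □ H) (val (a, b1)) (bc cG cH ι η (a, b1)) (a, b1) (a, b) (a', b1)
        (ι (cG a a')) (η t'') (ev2 _ _ (S_swap (S_rfl _ _))) (ev4 _ _ (S_rfl _ _)) ?_
        (hbcw_s) (hbcw_t)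
        (fun x y hx hy hne => bc_proper hg (a, b1) x y hx hy hne)
        (hg.disj _ _) x y hzx hzy hxy
      intro x hx hx1 hx2
      refine evb _ _ ?_ ?_ ?_ ?_
      · exact not_S (fun h => nuw h.symm) nvw.symm
      · rintro (⟨h, -⟩ | ⟨-, h⟩)
        exacts [nuw h.symm, hx1 h]
      · exact not_S nvw.symm nww'
      · rintro (⟨-, h⟩ | ⟨h, -⟩)
        exacts [hx2 h, nww' h]
    by_cases hz4 : z = (a', b1)
    · subst hz4
      refine at2 (K := G □ H) (val (a', b1)) (bc cG cH ι η (a', b1)) (a', b1) (a', b) (a, b1)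
        (ι (cG a a')) (η t'') (ev3 _ _ (S_swap (S_rfl _ _))) (ev4 _ _ (S_swap (S_rfl _ _))) ?_
        (hbcw'_s) (hbcw'_t)
        (fun x y hx hy hne => bc_proper hg (a', b1) x y hx hy hne)
        (hg.disj _ _) x y hzx hzy hxy
      intro x hx hx1 hx2
      refine evb _ _ ?_ ?_ ?_ ?_
      · exact not_S nuw'.symm nvw'.symm
      · exact not_S nuw'.symm nww'.symm
      · rintro (⟨h, -⟩ | ⟨-, h⟩)
        exacts [nvw' h.symm, hx1 h]
      · rintro (⟨h, -⟩ | ⟨-, h⟩)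
        exacts [nww' h.symm, hx2 h]
    · have hfar : ∀ x, val z x = bc cG cH ι η z x :=
        fun x => evb _ _ (not_S hz1 hz2) (not_S hz1 hz3) (not_S hz2 hz4) (not_S hz3 hz4)
      rw [hfar x, hfar y]
      exact bc_proper hg z x y hzx hzy hxy
  · -- description : every entry has both endpoints within distance 1
    intro p q hne
    have hWall : ∀ c d, S p q c d → W1 G H (a, b) (a', b) c → W1 G H (a, b) (a', b) d →
        (∃ w, (w = p ∨ w = q) ∧ W1 G H (a, b) (a', b) w) ∧
          ∀ w, w = p ∨ w = q → W1 G H (a, b) (a', b) w ∨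
            SH G H cG ι (a, b) (a', b) w (val p q) ∨
            SG' G H cH η (a, b) (a', b) w (val p q) := by
      intro c d h hc hd
      constructor
      · rcases h with ⟨rfl, rfl⟩ | ⟨rfl, rfl⟩
        · exact ⟨p, Or.inl rfl, hc⟩
        · exact ⟨p, Or.inl rfl, hd⟩
      · rcases h with ⟨rfl, rfl⟩ | ⟨rfl, rfl⟩ <;> rintro w (rfl | rfl)
        exacts [Or.inl hc, Or.inl hd, Or.inl hd, Or.inl hc]
    have hWu : W1 G H (a, b) (a', b) (a, b) := Or.inl rfl
    have hWv : W1 G H (a, b) (a', b) (a', b) := Or.inr (Or.inl rfl)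
    have hWw : W1 G H (a, b) (a', b) (a, b1) :=
      Or.inr (Or.inr (Or.inl (boxProd_adj_right.mpr hb1)))
    have hWw' : W1 G H (a, b) (a', b) (a', b1) :=
      Or.inr (Or.inr (Or.inr (boxProd_adj_right.mpr hb1)))
    by_cases h1 : S p q (a, b) (a', b)
    · have hadj : (G □ H).Adj p q := by
        rcases h1 with ⟨rfl, rfl⟩ | ⟨rfl, rfl⟩
        · exact boxProd_adj_left.mpr hA
        · exact (boxProd_adj_left.mpr hA).symm
      exact ⟨hadj, hWall _ _ h1 hWu hWv⟩
    by_cases h2 : S p q (a, b) (a, b1)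
    · have hadj : (G □ H).Adj p q := by
        rcases h2 with ⟨rfl, rfl⟩ | ⟨rfl, rfl⟩
        · exact boxProd_adj_right.mpr hb1
        · exact (boxProd_adj_right.mpr hb1).symm
      exact ⟨hadj, hWall _ _ h2 hWu hWw⟩
    by_cases h3 : S p q (a', b) (a', b1)
    · have hadj : (G □ H).Adj p q := by
        rcases h3 with ⟨rfl, rfl⟩ | ⟨rfl, rfl⟩
        · exact boxProd_adj_right.mpr hb1
        · exact (boxProd_adj_right.mpr hb1).symm
      exact ⟨hadj, hWall _ _ h3 hWv hWw'⟩
    by_cases h4 : S p q (a, b1) (a', b1)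
    · have hadj : (G □ H).Adj p q := by
        rcases h4 with ⟨rfl, rfl⟩ | ⟨rfl, rfl⟩
        · exact boxProd_adj_left.mpr hA
        · exact (boxProd_adj_left.mpr hA).symm
      exact ⟨hadj, hWall _ _ h4 hWw hWw'⟩
    · exact absurd (evb _ _ h1 h2 h3 h4) hne

/-- scheme A0 : `G`-type edge, `G`-type target color, no `H`-edges at row `b` -/
theorem schemeA0 (hg : Good G H cG cH ι η) {a a' a1 a1' : α} {b : β} (hA : G.Adj a a')
    (t' : FG) (hts : t' ≠ cG a a') (h0 : FH) (hnoH : ∀ y, ¬ H.Adj b y)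
    (h1c : G.Adj a a1 → cG a a1 = t') (h1u : ∀ w, G.Adj a w → cG a w = t' → w = a1)
    (h2c : G.Adj a' a1' → cG a' a1' = t') (h2u : ∀ w, G.Adj a' w → cG a' w = t' → w = a1') :
    ∃ val, Out G H cG cH ι η (a, b) (a', b) (ι t') val := by
  classical
  have haa' : a ≠ a' := hA.ne
  have na1a : G.Adj a a1 → a1 ≠ a := fun h => h.ne'
  have na1v : G.Adj a a1 → a1 ≠ a' := by
    intro h he; exact hts ((he ▸ h1c h).symm ▸ rfl)
  have na1'a' : G.Adj a' a1' → a1' ≠ a' := fun h => h.ne'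
  have na1'a : G.Adj a' a1' → a1' ≠ a := by
    intro h he
    apply hts
    rw [← h2c h, he, hg.gsym]
  have na11' : G.Adj a a1 → G.Adj a' a1' → a1 ≠ a1' := by
    intro hg1 hg2 he
    apply haa'
    refine hg.guniq (v := a1) hg1.symm ?_ ?_
    · rw [he]; exact hg2.symm
    · rw [hg.gsym, h1c hg1, he, hg.gsym, h2c hg2]
  set val : (α × β) → (α × β) → C := fun p q =>
    if S p q (a, b) (a', b) then ι t'
    else if G.Adj a a1 ∧ S p q (a, b) (a1, b) then η h0
    else if G.Adj a' a1' ∧ S p q (a', b) (a1', b) then η h0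
    else bc cG cH ι η p q with hval
  have ev1 : ∀ p q, S p q (a, b) (a', b) → val p q = ι t' := by
    intro p q h; simp only [hval]; rw [if_pos h]
  have ev2 : ∀ p q, G.Adj a a1 → S p q (a, b) (a1, b) → val p q = η h0 := by
    intro p q hg1 h; simp only [hval]
    rw [if_neg (S_discr' h (pne_fst (na1v hg1)) (pne_fst (na1a hg1))), if_pos ⟨hg1, h⟩]
  have ev3 : ∀ p q, G.Adj a' a1' → S p q (a', b) (a1', b) → val p q = η h0 := by
    intro p q hg2 h; simp only [hval]
    rw [if_neg (S_discr' h (pne_fst (na1'a' hg2)) (pne_fst (na1'a hg2))), if_neg ?_,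
      if_pos ⟨hg2, h⟩]
    rintro ⟨hg1, h2⟩
    rcases S_funct h2 h with ⟨h3, -⟩ | ⟨h3, -⟩
    · exact pne_fst haa' h3
    · exact pne_fst ((na1'a hg2).symm) h3
  have evb : ∀ p q, ¬ S p q (a, b) (a', b) → ¬ (G.Adj a a1 ∧ S p q (a, b) (a1, b)) →
      ¬ (G.Adj a' a1' ∧ S p q (a', b) (a1', b)) → val p q = bc cG cH ι η p q := by
    intro p q h1 h2 h3; simp only [hval]
    rw [if_neg h1, if_neg h2, if_neg h3]
  -- base exclusions
  have hbc_no : ∀ (z : α × β), z.2 = b → ∀ x, (G □ H).Adj z x →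
      (G.Adj z.1 x.1 ∧ z.2 = x.2) := by
    intro z hz x hx
    rw [boxProd_adj] at hx
    rcases hx with h | ⟨hxh, -⟩
    · exact h
    · exact absurd (hz ▸ hxh) (hnoH x.2)
  have hbcu_t : ∀ x, (G □ H).Adj (a, b) x → x ≠ (a', b) → x ≠ (a1, b) →
      bc cG cH ι η (a, b) x ≠ ι t' := by
    intro x hx hxv hxw
    obtain ⟨hxg, hxe⟩ := hbc_no (a, b) rfl x hx
    rw [bc_G hxe]
    intro h
    have h1 : x.1 = a1 := h1u x.1 hxg (hg.iinj h)
    exact hxw (Prod.ext h1 hxe.symm)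
  have hbcv_t : ∀ x, (G □ H).Adj (a', b) x → x ≠ (a, b) → x ≠ (a1', b) →
      bc cG cH ι η (a', b) x ≠ ι t' := by
    intro x hx hxu hxw
    obtain ⟨hxg, hxe⟩ := hbc_no (a', b) rfl x hx
    rw [bc_G hxe]
    intro h
    exact hxw (Prod.ext (h2u x.1 hxg (hg.iinj h)) hxe.symm)
  have hbc_h0 : ∀ (z : α × β), z.2 = b → ∀ x, (G □ H).Adj z x →
      bc cG cH ι η z x ≠ η h0 := by
    intro z hz x hx
    obtain ⟨hxg, hxe⟩ := hbc_no z hz x hx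
    rw [bc_G hxe]
    exact hg.disj _ _
  refine ⟨val, ?_, ?_, ev1 _ _ (S_rfl _ _), ?_⟩
  · intro p q
    simp only [hval, S_comm p q, bc_symm hg p q]
  · -- properness
    intro z x y hzx hzy hxy
    by_cases hz1 : z = (a, b)
    · subst hz1
      by_cases hg1 : G.Adj a a1
      · refine at2 (K := G □ H) (val (a, b)) (bc cG cH ι η (a, b)) (a, b) (a', b) (a1, b)
          (ι t') (η h0) (ev1 _ _ (S_rfl _ _)) (ev2 _ _ hg1 (S_rfl _ _)) ?_
          hbcu_t (fun x hx h1 h2 => hbc_h0 (a, b) rfl x hx)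
          (fun x y hx hy hne => bc_proper hg (a, b) x y hx hy hne)
          (hg.disj _ _) x y hzx hzy hxy
        intro x hx hx1 hx2
        refine evb _ _ ?_ ?_ ?_
        · rintro (⟨-, h⟩ | ⟨h, -⟩)
          exacts [hx1 h, pne_fst haa' h]
        · rintro ⟨-, (⟨-, h⟩ | ⟨h, -⟩)⟩
          exacts [hx2 h, pne_fst (na1a hg1).symm h]
        · rintro ⟨hg2, (⟨h, -⟩ | ⟨h, -⟩)⟩
          exacts [pne_fst haa' h, pne_fst (na1'a hg2).symm h]
      · refine at1 (K := G □ H) (val (a, b)) (bc cG cH ι η (a, b)) (a, b) (a', b)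
          (ι t') (ev1 _ _ (S_rfl _ _)) ?_ ?_
          (fun x y hx hy hne => bc_proper hg (a, b) x y hx hy hne) x y hzx hzy hxy
        · intro x hx hx1
          refine evb _ _ ?_ ?_ ?_
          · rintro (⟨-, h⟩ | ⟨h, -⟩)
            exacts [hx1 h, pne_fst haa' h]
          · rintro ⟨hg1', -⟩; exact hg1 hg1'
          · rintro ⟨hg2, (⟨h, -⟩ | ⟨h, -⟩)⟩
            exacts [pne_fst haa' h, pne_fst (na1'a hg2).symm h]
        · intro x hx hx1
          refine hbcu_t x hx hx1 ?_
          rintro rfl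
          exact hg1 (hbc_no (a, b) rfl _ hx).1
    by_cases hz2 : z = (a', b)
    · subst hz2
      by_cases hg2 : G.Adj a' a1'
      · refine at2 (K := G □ H) (val (a', b)) (bc cG cH ι η (a', b)) (a', b) (a, b) (a1', b)
          (ι t') (η h0) (ev1 _ _ (S_swap (S_rfl _ _))) (ev3 _ _ hg2 (S_rfl _ _)) ?_
          hbcv_t (fun x hx h1 h2 => hbc_h0 (a', b) rfl x hx)
          (fun x y hx hy hne => bc_proper hg (a', b) x y hx hy hne)
          (hg.disj _ _) x y hzx hzy hxy
        intro x hx hx1 hx2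
        refine evb _ _ ?_ ?_ ?_
        · rintro (⟨h, -⟩ | ⟨-, h⟩)
          exacts [pne_fst haa'.symm h, hx1 h]
        · rintro ⟨hg1', (⟨h, -⟩ | ⟨h, -⟩)⟩
          exacts [pne_fst haa'.symm h, pne_fst (na1v hg1').symm h]
        · rintro ⟨-, (⟨-, h⟩ | ⟨h, -⟩)⟩
          exacts [hx2 h, pne_fst (na1'a' hg2).symm h]
      · refine at1 (K := G □ H) (val (a', b)) (bc cG cH ι η (a', b)) (a', b) (a, b)
          (ι t') (ev1 _ _ (S_swap (S_rfl _ _))) ?_ ?_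
          (fun x y hx hy hne => bc_proper hg (a', b) x y hx hy hne) x y hzx hzy hxy
        · intro x hx hx1
          refine evb _ _ ?_ ?_ ?_
          · rintro (⟨h, -⟩ | ⟨-, h⟩)
            exacts [pne_fst haa'.symm h, hx1 h]
          · rintro ⟨hg1', (⟨h, -⟩ | ⟨h, -⟩)⟩
            exacts [pne_fst haa'.symm h, pne_fst (na1v hg1').symm h]
          · rintro ⟨hg2', -⟩; exact hg2 hg2'
        · intro x hx hx1
          refine hbcv_t x hx hx1 ?_
          rintro rfl
          exact hg2 (hbc_no (a', b) rfl _ hx).1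
    by_cases hz3 : G.Adj a a1 ∧ z = (a1, b)
    · obtain ⟨hg1, rfl⟩ := hz3
      refine at1 (K := G □ H) (val (a1, b)) (bc cG cH ι η (a1, b)) (a1, b) (a, b)
        (η h0) (ev2 _ _ hg1 (S_swap (S_rfl _ _))) ?_
        (fun x hx h1 => hbc_h0 (a1, b) rfl x hx)
        (fun x y hx hy hne => bc_proper hg (a1, b) x y hx hy hne) x y hzx hzy hxy
      intro x hx hx1
      refine evb _ _ ?_ ?_ ?_
      · exact not_S (pne_fst (na1a hg1)) (pne_fst (na1v hg1))
      · rintro ⟨-, (⟨h, -⟩ | ⟨-, h⟩)⟩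
        exacts [pne_fst (na1a hg1) h, hx1 h]
      · rintro ⟨hg2, (⟨h, -⟩ | ⟨h, -⟩)⟩
        exacts [pne_fst (na1v hg1) h, pne_fst (na11' hg1 hg2) h]
    by_cases hz4 : G.Adj a' a1' ∧ z = (a1', b)
    · obtain ⟨hg2, rfl⟩ := hz4
      refine at1 (K := G □ H) (val (a1', b)) (bc cG cH ι η (a1', b)) (a1', b) (a', b)
        (η h0) (ev3 _ _ hg2 (S_swap (S_rfl _ _))) ?_
        (fun x hx h1 => hbc_h0 (a1', b) rfl x hx)
        (fun x y hx hy hne => bc_proper hg (a1', b) x y hx hy hne) x y hzx hzy hxy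
      intro x hx hx1
      refine evb _ _ ?_ ?_ ?_
      · exact not_S (pne_fst (na1'a hg2)) (pne_fst (na1'a' hg2))
      · rintro ⟨hg1, (⟨h, -⟩ | ⟨h, -⟩)⟩
        exacts [pne_fst (na1'a hg2) h, pne_fst (na11' hg1 hg2).symm h]
      · rintro ⟨-, (⟨h, -⟩ | ⟨-, h⟩)⟩
        exacts [pne_fst (na1'a' hg2) h, hx1 h]
    · have hfar : ∀ x, val z x = bc cG cH ι η z x := by
        intro x
        refine evb _ _ (not_S hz1 hz2) ?_ ?_
        · rintro ⟨hg1, (⟨h, -⟩ | ⟨h, -⟩)⟩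
          exacts [hz1 h, hz3 ⟨hg1, h⟩]
        · rintro ⟨hg2, (⟨h, -⟩ | ⟨h, -⟩)⟩
          exacts [hz2 h, hz4 ⟨hg2, h⟩]
      rw [hfar x, hfar y]
      exact bc_proper hg z x y hzx hzy hxy
  · -- description
    intro p q hne
    have hWall : ∀ c d, S p q c d → W1 G H (a, b) (a', b) c → W1 G H (a, b) (a', b) d →
        (∃ w, (w = p ∨ w = q) ∧ W1 G H (a, b) (a', b) w) ∧
          ∀ w, w = p ∨ w = q → W1 G H (a, b) (a', b) w ∨
            SH G H cG ι (a, b) (a', b) w (val p q) ∨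
            SG' G H cH η (a, b) (a', b) w (val p q) := by
      intro c d h hc hd
      constructor
      · rcases h with ⟨rfl, rfl⟩ | ⟨rfl, rfl⟩
        · exact ⟨p, Or.inl rfl, hc⟩
        · exact ⟨p, Or.inl rfl, hd⟩
      · rcases h with ⟨rfl, rfl⟩ | ⟨rfl, rfl⟩ <;> rintro w (rfl | rfl)
        exacts [Or.inl hc, Or.inl hd, Or.inl hd, Or.inl hc]
    by_cases h1 : S p q (a, b) (a', b)
    · have hadj : (G □ H).Adj p q := by
        rcases h1 with ⟨rfl, rfl⟩ | ⟨rfl, rfl⟩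
        · exact boxProd_adj_left.mpr hA
        · exact (boxProd_adj_left.mpr hA).symm
      exact ⟨hadj, hWall _ _ h1 (Or.inl rfl) (Or.inr (Or.inl rfl))⟩
    by_cases h2 : G.Adj a a1 ∧ S p q (a, b) (a1, b)
    · obtain ⟨hg1, hS⟩ := h2
      have hadj : (G □ H).Adj p q := by
        rcases hS with ⟨rfl, rfl⟩ | ⟨rfl, rfl⟩
        · exact boxProd_adj_left.mpr hg1
        · exact (boxProd_adj_left.mpr hg1).symm
      exact ⟨hadj, hWall _ _ hS (Or.inl rfl)
        (Or.inr (Or.inr (Or.inl (boxProd_adj_left.mpr hg1))))⟩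
    by_cases h3 : G.Adj a' a1' ∧ S p q (a', b) (a1', b)
    · obtain ⟨hg2, hS⟩ := h3
      have hadj : (G □ H).Adj p q := by
        rcases hS with ⟨rfl, rfl⟩ | ⟨rfl, rfl⟩
        · exact boxProd_adj_left.mpr hg2
        · exact (boxProd_adj_left.mpr hg2).symm
      exact ⟨hadj, hWall _ _ hS (Or.inr (Or.inl rfl))
        (Or.inr (Or.inr (Or.inr (boxProd_adj_left.mpr hg2))))⟩
    · exact absurd (evb _ _ h1 h2 h3) hne

/-- scheme A1 : `G`-type edge, `G`-type target color `t'`, an `H`-neighbour `bh` of `b` exists.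
Double square rotation over rows `b, bh` and columns `a, a', a1, a1'`. -/
theorem schemeA1 (hg : Good G H cG cH ι η) {a a' a1 a1' : α} {b bh : β} (hA : G.Adj a a')
    (hbb : H.Adj b bh) (t' : FG) (hts : t' ≠ cG a a')
    (h1c : G.Adj a a1 → cG a a1 = t') (h1u : ∀ w, G.Adj a w → cG a w = t' → w = a1)
    (h2c : G.Adj a' a1' → cG a' a1' = t') (h2u : ∀ w, G.Adj a' w → cG a' w = t' → w = a1') :
    ∃ val, Out G H cG cH ι η (a, b) (a', b) (ι t') val := by
  classical
  have haa' : a ≠ a' := hA.ne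
  have hbbh : b ≠ bh := hbb.ne
  have na1a : G.Adj a a1 → a1 ≠ a := fun h => h.ne'
  have na1v : G.Adj a a1 → a1 ≠ a' := by
    intro h he; exact hts ((he ▸ h1c h).symm ▸ rfl)
  have na1'a' : G.Adj a' a1' → a1' ≠ a' := fun h => h.ne'
  have na1'a : G.Adj a' a1' → a1' ≠ a := by
    intro h he
    apply hts
    rw [← h2c h, he, hg.gsym]
  have na11' : G.Adj a a1 → G.Adj a' a1' → a1 ≠ a1' := by
    intro hg1 hg2 he
    apply haa'
    refine hg.guniq (v := a1) hg1.symm ?_ ?_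
    · rw [he]; exact hg2.symm
    · rw [hg.gsym, h1c hg1, he, hg.gsym, h2c hg2]
  -- uniqueness of the color `cH b bh` at rows b and bh
  have hubh : ∀ y, H.Adj b y → cH b y = cH b bh → y = bh := fun y hy h => hg.huniq hy hbb h
  have hubh' : ∀ y, H.Adj bh y → cH bh y = cH b bh → y = b := by
    intro y hy h
    exact hg.huniq hy hbb.symm (h.trans (hg.hsym b bh))
  set val : (α × β) → (α × β) → C := fun p q =>
    if S p q (a, b) (a', b) then ι t'
    else if S p q (a, b) (a, bh) then ι (cG a a')
    else if S p q (a', b) (a', bh) then ι (cG a a')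
    else if S p q (a, bh) (a', bh) then ι t'
    else if G.Adj a a1 ∧ S p q (a, b) (a1, b) then η (cH b bh)
    else if G.Adj a a1 ∧ S p q (a1, b) (a1, bh) then ι t'
    else if G.Adj a a1 ∧ S p q (a, bh) (a1, bh) then η (cH b bh)
    else if G.Adj a' a1' ∧ S p q (a', b) (a1', b) then η (cH b bh)
    else if G.Adj a' a1' ∧ S p q (a1', b) (a1', bh) then ι t'
    else if G.Adj a' a1' ∧ S p q (a', bh) (a1', bh) then η (cH b bh)
    else bc cG cH ι η p q with hval
  have ev1 : ∀ p q, S p q (a, b) (a', b) → val p q = ι t' := by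
    intro p q h; simp only [hval]; rw [if_pos h]
  have ev2 : ∀ p q, S p q (a, b) (a, bh) → val p q = ι (cG a a') := by
    intro p q h; simp only [hval]
    rw [if_neg (S_discr' h (pne_fst haa') (pne_snd hbbh.symm)), if_pos h]
  have ev3 : ∀ p q, S p q (a', b) (a', bh) → val p q = ι (cG a a') := by
    intro p q h; simp only [hval]
    rw [if_neg (S_discr' h (pne_snd hbbh.symm) (pne_fst haa'.symm)),
      if_neg (S_discr h (pne_fst haa'.symm) (pne_fst haa'.symm)), if_pos h]
  have ev4 : ∀ p q, S p q (a, bh) (a', bh) → val p q = ι t' := by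
    intro p q h; simp only [hval]
    rw [if_neg (S_discr h (pne_snd hbbh.symm) (pne_fst haa')),
      if_neg (S_discr' h (pne_fst haa'.symm) (pne_fst haa'.symm)),
      if_neg (S_discr h (pne_fst haa') (pne_fst haa')), if_pos h]
  have ev5 : ∀ p q, G.Adj a a1 → S p q (a, b) (a1, b) → val p q = η (cH b bh) := by
    intro p q hg1 h; simp only [hval]
    rw [if_neg (S_discr' h (pne_fst (na1v hg1)) (pne_fst (na1a hg1))),
      if_neg (S_discr' h (pne_fst (na1a hg1)) (pne_fst (na1a hg1))),
      if_neg (S_discr h (pne_fst haa') (pne_fst haa')),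
      if_neg (S_discr h (pne_snd hbbh) (pne_fst haa')), if_pos ⟨hg1, h⟩]
  have ev6 : ∀ p q, G.Adj a a1 → S p q (a1, b) (a1, bh) → val p q = ι t' := by
    intro p q hg1 h; simp only [hval]
    rw [if_neg (S_discr h (pne_fst (na1a hg1)) (pne_fst (na1v hg1))),
      if_neg (S_discr h (pne_fst (na1a hg1)) (pne_fst (na1a hg1))),
      if_neg (S_discr h (pne_fst (na1v hg1)) (pne_fst (na1v hg1))),
      if_neg (S_discr h (pne_fst (na1a hg1)) (pne_fst (na1v hg1))),
      if_neg (fun hc => (S_discr' h (pne_snd hbbh.symm) (pne_fst (na1a hg1))) hc.2),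
      if_pos ⟨hg1, h⟩]
  have ev7 : ∀ p q, G.Adj a a1 → S p q (a, bh) (a1, bh) → val p q = η (cH b bh) := by
    intro p q hg1 h; simp only [hval]
    rw [if_neg (S_discr h (pne_snd hbbh.symm) (pne_fst haa')),
      if_neg (S_discr' h (pne_fst (na1a hg1)) (pne_snd hbbh.symm)),
      if_neg (S_discr h (pne_fst haa') (pne_fst haa')),
      if_neg (S_discr' h (pne_fst (na1v hg1)) (pne_fst (na1a hg1))),
      if_neg (fun hc => (S_discr h (pne_snd hbbh.symm) (pne_fst (na1a hg1).symm)) hc.2),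
      if_neg (fun hc => (S_discr h (pne_fst (na1a hg1).symm) (pne_fst (na1a hg1).symm)) hc.2),
      if_pos ⟨hg1, h⟩]
  have ev8 : ∀ p q, G.Adj a' a1' → S p q (a', b) (a1', b) → val p q = η (cH b bh) := by
    intro p q hg2 h; simp only [hval]
    rw [if_neg (S_discr' h (pne_fst (na1'a' hg2)) (pne_fst (na1'a hg2))),
      if_neg (S_discr h (pne_fst haa'.symm) (pne_fst haa'.symm)),
      if_neg (S_discr' h (pne_snd hbbh) (pne_fst (na1'a' hg2))),
      if_neg (S_discr h (pne_fst haa'.symm) (pne_snd hbbh)),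
      if_neg (fun hc => (S_discr h (pne_fst haa'.symm) (pne_fst (na1v hc.1).symm)) hc.2),
      if_neg (fun hc => (S_discr h (pne_fst (na1v hc.1).symm) (pne_snd hbbh)) hc.2),
      if_neg (fun hc => (S_discr h (pne_fst haa'.symm) (pne_snd hbbh)) hc.2),
      if_pos ⟨hg2, h⟩]
  have ev9 : ∀ p q, G.Adj a' a1' → S p q (a1', b) (a1', bh) → val p q = ι t' := by
    intro p q hg2 h; simp only [hval]
    rw [if_neg (S_discr h (pne_fst (na1'a hg2)) (pne_fst (na1'a' hg2))),
      if_neg (S_discr h (pne_fst (na1'a hg2)) (pne_fst (na1'a hg2))),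
      if_neg (S_discr h (pne_fst (na1'a' hg2)) (pne_fst (na1'a' hg2))),
      if_neg (S_discr h (pne_fst (na1'a hg2)) (pne_fst (na1'a' hg2))),
      if_neg (fun hc => (S_discr h (pne_fst (na1'a hg2)) (pne_fst (na11' hc.1 hg2).symm)) hc.2),
      if_neg (fun hc =>
        (S_discr h (pne_fst (na11' hc.1 hg2).symm) (pne_fst (na11' hc.1 hg2).symm)) hc.2),
      if_neg (fun hc => (S_discr h (pne_fst (na1'a hg2)) (pne_fst (na11' hc.1 hg2).symm)) hc.2),
      if_neg (fun hc => (S_discr' h (pne_snd hbbh.symm) (pne_snd hbbh.symm)) hc.2),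
      if_pos ⟨hg2, h⟩]
  have ev10 : ∀ p q, G.Adj a' a1' → S p q (a', bh) (a1', bh) → val p q = η (cH b bh) := by
    intro p q hg2 h; simp only [hval]
    rw [if_neg (S_discr h (pne_fst haa'.symm) (pne_snd hbbh.symm)),
      if_neg (S_discr h (pne_fst haa'.symm) (pne_fst haa'.symm)),
      if_neg (S_discr' h (pne_fst (na1'a' hg2)) (pne_snd hbbh.symm)),
      if_neg (S_discr' h (pne_fst (na1'a' hg2)) (pne_fst (na1'a hg2))),
      if_neg (fun hc => (S_discr h (pne_fst haa'.symm) (pne_snd hbbh.symm)) hc.2),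
      if_neg (fun hc => (S_discr h (pne_snd hbbh.symm) (pne_fst (na1v hc.1).symm)) hc.2),
      if_neg (fun hc => (S_discr h (pne_fst haa'.symm) (pne_fst (na1v hc.1).symm)) hc.2),
      if_neg (fun hc => (S_discr h (pne_snd hbbh.symm) (pne_snd hbbh.symm)) hc.2),
      if_neg (fun hc => (S_discr h (pne_snd hbbh.symm) (pne_fst (na1'a' hg2).symm)) hc.2),
      if_pos ⟨hg2, h⟩]
  have evb : ∀ p q, ¬ S p q (a, b) (a', b) → ¬ S p q (a, b) (a, bh) →
      ¬ S p q (a', b) (a', bh) → ¬ S p q (a, bh) (a', bh) →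
      ¬ (G.Adj a a1 ∧ S p q (a, b) (a1, b)) → ¬ (G.Adj a a1 ∧ S p q (a1, b) (a1, bh)) →
      ¬ (G.Adj a a1 ∧ S p q (a, bh) (a1, bh)) → ¬ (G.Adj a' a1' ∧ S p q (a', b) (a1', b)) →
      ¬ (G.Adj a' a1' ∧ S p q (a1', b) (a1', bh)) →
      ¬ (G.Adj a' a1' ∧ S p q (a', bh) (a1', bh)) →
      val p q = bc cG cH ι η p q := by
    intro p q e1 e2 e3 e4 e5 e6 e7 e8 e9 e10; simp only [hval]
    rw [if_neg e1, if_neg e2, if_neg e3, if_neg e4, if_neg e5, if_neg e6, if_neg e7,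
      if_neg e8, if_neg e9, if_neg e10]
  refine ⟨val, ?_, ?_, ev1 _ _ (S_rfl _ _), ?_⟩
  · intro p q
    simp only [hval, S_comm p q, bc_symm hg p q]
  -- base-color exclusions at the touched vertices
  · -- properness
    have hbcu_t : ∀ x, (G □ H).Adj (a, b) x → x ≠ (a', b) → (G.Adj a a1 → x ≠ (a1, b)) →
        bc cG cH ι η (a, b) x ≠ ι t' := by
      intro x hx hxv hxw
      rw [boxProd_adj] at hx
      rcases hx with ⟨hxg, hxe⟩ | ⟨hxh, hxe⟩
      · rw [bc_G hxe]
        intro h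
        have h1 : x.1 = a1 := h1u x.1 hxg (hg.iinj h)
        exact hxw (h1 ▸ hxg) (Prod.ext h1 hxe.symm)
      · rw [bc_H hxh.ne]; exact fun h => hg.disj _ _ h.symm
    have hbcu_s : ∀ x, (G □ H).Adj (a, b) x → x ≠ (a', b) →
        bc cG cH ι η (a, b) x ≠ ι (cG a a') := by
      intro x hx hxv
      rw [boxProd_adj] at hx
      rcases hx with ⟨hxg, hxe⟩ | ⟨hxh, hxe⟩
      · rw [bc_G hxe]
        intro h
        exact hxv (Prod.ext (hg.guniq hxg hA (hg.iinj h)) hxe.symm)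
      · rw [bc_H hxh.ne]; exact fun h => hg.disj _ _ h.symm
    have hbcu_h : ∀ x, (G □ H).Adj (a, b) x → x ≠ (a, bh) →
        bc cG cH ι η (a, b) x ≠ η (cH b bh) := by
      intro x hx hxw
      rw [boxProd_adj] at hx
      rcases hx with ⟨hxg, hxe⟩ | ⟨hxh, hxe⟩
      · rw [bc_G hxe]; exact hg.disj _ _
      · rw [bc_H hxh.ne]
        intro h
        exact hxw (Prod.ext hxe.symm (hubh x.2 hxh (hg.einj h)))
    have hbcv_t : ∀ x, (G □ H).Adj (a', b) x → x ≠ (a, b) → (G.Adj a' a1' → x ≠ (a1', b)) →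
        bc cG cH ι η (a', b) x ≠ ι t' := by
      intro x hx hxu hxw
      rw [boxProd_adj] at hx
      rcases hx with ⟨hxg, hxe⟩ | ⟨hxh, hxe⟩
      · rw [bc_G hxe]
        intro h
        have h1 : x.1 = a1' := h2u x.1 hxg (hg.iinj h)
        exact hxw (h1 ▸ hxg) (Prod.ext h1 hxe.symm)
      · rw [bc_H hxh.ne]; exact fun h => hg.disj _ _ h.symm
    have hbcv_s : ∀ x, (G □ H).Adj (a', b) x → x ≠ (a, b) →
        bc cG cH ι η (a', b) x ≠ ι (cG a a') := by
      intro x hx hxu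
      rw [boxProd_adj] at hx
      rcases hx with ⟨hxg, hxe⟩ | ⟨hxh, hxe⟩
      · rw [bc_G hxe]
        intro h
        refine hxu (Prod.ext (hg.guniq hxg hA.symm ?_) hxe.symm)
        rw [hg.iinj h, hg.gsym]
      · rw [bc_H hxh.ne]; exact fun h => hg.disj _ _ h.symm
    have hbcv_h : ∀ x, (G □ H).Adj (a', b) x → x ≠ (a', bh) →
        bc cG cH ι η (a', b) x ≠ η (cH b bh) := by
      intro x hx hxw
      rw [boxProd_adj] at hx
      rcases hx with ⟨hxg, hxe⟩ | ⟨hxh, hxe⟩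
      · rw [bc_G hxe]; exact hg.disj _ _
      · rw [bc_H hxh.ne]
        intro h
        exact hxw (Prod.ext hxe.symm (hubh x.2 hxh (hg.einj h)))
    have hbca_s : ∀ x, (G □ H).Adj (a, bh) x → x ≠ (a', bh) →
        bc cG cH ι η (a, bh) x ≠ ι (cG a a') := by
      intro x hx hxv
      rw [boxProd_adj] at hx
      rcases hx with ⟨hxg, hxe⟩ | ⟨hxh, hxe⟩
      · rw [bc_G hxe]
        intro h
        exact hxv (Prod.ext (hg.guniq hxg hA (hg.iinj h)) hxe.symm)
      · rw [bc_H hxh.ne]; exact fun h => hg.disj _ _ h.symm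
    have hbca_t : ∀ x, (G □ H).Adj (a, bh) x → (G.Adj a a1 → x ≠ (a1, bh)) →
        bc cG cH ι η (a, bh) x ≠ ι t' := by
      intro x hx hxw
      rw [boxProd_adj] at hx
      rcases hx with ⟨hxg, hxe⟩ | ⟨hxh, hxe⟩
      · rw [bc_G hxe]
        intro h
        have h1 : x.1 = a1 := h1u x.1 hxg (hg.iinj h)
        exact hxw (h1 ▸ hxg) (Prod.ext h1 hxe.symm)
      · rw [bc_H hxh.ne]; exact fun h => hg.disj _ _ h.symm
    have hbca_h : ∀ x, (G □ H).Adj (a, bh) x → x ≠ (a, b) →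
        bc cG cH ι η (a, bh) x ≠ η (cH b bh) := by
      intro x hx hxu
      rw [boxProd_adj] at hx
      rcases hx with ⟨hxg, hxe⟩ | ⟨hxh, hxe⟩
      · rw [bc_G hxe]; exact hg.disj _ _
      · rw [bc_H hxh.ne]
        intro h
        exact hxu (Prod.ext hxe.symm (hubh' x.2 hxh (hg.einj h)))
    have hbca'_s : ∀ x, (G □ H).Adj (a', bh) x → x ≠ (a, bh) →
        bc cG cH ι η (a', bh) x ≠ ι (cG a a') := by
      intro x hx hxu
      rw [boxProd_adj] at hx
      rcases hx with ⟨hxg, hxe⟩ | ⟨hxh, hxe⟩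
      · rw [bc_G hxe]
        intro h
        refine hxu (Prod.ext (hg.guniq hxg hA.symm ?_) hxe.symm)
        rw [hg.iinj h, hg.gsym]
      · rw [bc_H hxh.ne]; exact fun h => hg.disj _ _ h.symm
    have hbca'_t : ∀ x, (G □ H).Adj (a', bh) x → (G.Adj a' a1' → x ≠ (a1', bh)) →
        bc cG cH ι η (a', bh) x ≠ ι t' := by
      intro x hx hxw
      rw [boxProd_adj] at hx
      rcases hx with ⟨hxg, hxe⟩ | ⟨hxh, hxe⟩
      · rw [bc_G hxe]
        intro h
        have h1 : x.1 = a1' := h2u x.1 hxg (hg.iinj h)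
        exact hxw (h1 ▸ hxg) (Prod.ext h1 hxe.symm)
      · rw [bc_H hxh.ne]; exact fun h => hg.disj _ _ h.symm
    have hbca'_h : ∀ x, (G □ H).Adj (a', bh) x → x ≠ (a', b) →
        bc cG cH ι η (a', bh) x ≠ η (cH b bh) := by
      intro x hx hxv
      rw [boxProd_adj] at hx
      rcases hx with ⟨hxg, hxe⟩ | ⟨hxh, hxe⟩
      · rw [bc_G hxe]; exact hg.disj _ _
      · rw [bc_H hxh.ne]
        intro h
        exact hxv (Prod.ext hxe.symm (hubh' x.2 hxh (hg.einj h)))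
    have hbcw1_h : ∀ x, (G □ H).Adj (a1, b) x → x ≠ (a1, bh) →
        bc cG cH ι η (a1, b) x ≠ η (cH b bh) := by
      intro x hx hxw
      rw [boxProd_adj] at hx
      rcases hx with ⟨hxg, hxe⟩ | ⟨hxh, hxe⟩
      · rw [bc_G hxe]; exact hg.disj _ _
      · rw [bc_H hxh.ne]
        intro h
        exact hxw (Prod.ext hxe.symm (hubh x.2 hxh (hg.einj h)))
    have hbcw1_t : G.Adj a a1 → ∀ x, (G □ H).Adj (a1, b) x → x ≠ (a, b) →
        bc cG cH ι η (a1, b) x ≠ ι t' := by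
      intro hg1 x hx hxu
      rw [boxProd_adj] at hx
      rcases hx with ⟨hxg, hxe⟩ | ⟨hxh, hxe⟩
      · rw [bc_G hxe]
        intro h
        refine hxu (Prod.ext (hg.guniq hxg hg1.symm ?_) hxe.symm)
        rw [hg.iinj h, hg.gsym, h1c hg1]
      · rw [bc_H hxh.ne]; exact fun h => hg.disj _ _ h.symm
    have hbcw1h_t : G.Adj a a1 → ∀ x, (G □ H).Adj (a1, bh) x → x ≠ (a, bh) →
        bc cG cH ι η (a1, bh) x ≠ ι t' := by
      intro hg1 x hx hxu
      rw [boxProd_adj] at hx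
      rcases hx with ⟨hxg, hxe⟩ | ⟨hxh, hxe⟩
      · rw [bc_G hxe]
        intro h
        refine hxu (Prod.ext (hg.guniq hxg hg1.symm ?_) hxe.symm)
        rw [hg.iinj h, hg.gsym, h1c hg1]
      · rw [bc_H hxh.ne]; exact fun h => hg.disj _ _ h.symm
    have hbcw1h_h : ∀ x, (G □ H).Adj (a1, bh) x → x ≠ (a1, b) →
        bc cG cH ι η (a1, bh) x ≠ η (cH b bh) := by
      intro x hx hxu
      rw [boxProd_adj] at hx
      rcases hx with ⟨hxg, hxe⟩ | ⟨hxh, hxe⟩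
      · rw [bc_G hxe]; exact hg.disj _ _
      · rw [bc_H hxh.ne]
        intro h
        exact hxu (Prod.ext hxe.symm (hubh' x.2 hxh (hg.einj h)))
    have hbcw2_h : ∀ x, (G □ H).Adj (a1', b) x → x ≠ (a1', bh) →
        bc cG cH ι η (a1', b) x ≠ η (cH b bh) := by
      intro x hx hxw
      rw [boxProd_adj] at hx
      rcases hx with ⟨hxg, hxe⟩ | ⟨hxh, hxe⟩
      · rw [bc_G hxe]; exact hg.disj _ _
      · rw [bc_H hxh.ne]
        intro h
        exact hxw (Prod.ext hxe.symm (hubh x.2 hxh (hg.einj h)))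
    have hbcw2_t : G.Adj a' a1' → ∀ x, (G □ H).Adj (a1', b) x → x ≠ (a', b) →
        bc cG cH ι η (a1', b) x ≠ ι t' := by
      intro hg2 x hx hxv
      rw [boxProd_adj] at hx
      rcases hx with ⟨hxg, hxe⟩ | ⟨hxh, hxe⟩
      · rw [bc_G hxe]
        intro h
        refine hxv (Prod.ext (hg.guniq hxg hg2.symm ?_) hxe.symm)
        rw [hg.iinj h, hg.gsym, h2c hg2]
      · rw [bc_H hxh.ne]; exact fun h => hg.disj _ _ h.symm
    have hbcw2h_t : G.Adj a' a1' → ∀ x, (G □ H).Adj (a1', bh) x → x ≠ (a', bh) →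
        bc cG cH ι η (a1', bh) x ≠ ι t' := by
      intro hg2 x hx hxv
      rw [boxProd_adj] at hx
      rcases hx with ⟨hxg, hxe⟩ | ⟨hxh, hxe⟩
      · rw [bc_G hxe]
        intro h
        refine hxv (Prod.ext (hg.guniq hxg hg2.symm ?_) hxe.symm)
        rw [hg.iinj h, hg.gsym, h2c hg2]
      · rw [bc_H hxh.ne]; exact fun h => hg.disj _ _ h.symm
    have hbcw2h_h : ∀ x, (G □ H).Adj (a1', bh) x → x ≠ (a1', b) →
        bc cG cH ι η (a1', bh) x ≠ η (cH b bh) := by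
      intro x hx hxv
      rw [boxProd_adj] at hx
      rcases hx with ⟨hxg, hxe⟩ | ⟨hxh, hxe⟩
      · rw [bc_G hxe]; exact hg.disj _ _
      · rw [bc_H hxh.ne]
        intro h
        exact hxv (Prod.ext hxe.symm (hubh' x.2 hxh (hg.einj h)))
    -- characterizations of `val` off the touched edges, per vertex
    have char_u : ∀ x, x ≠ (a', b) → x ≠ (a, bh) → (G.Adj a a1 → x ≠ (a1, b)) →
        val (a, b) x = bc cG cH ι η (a, b) x := by
      intro x hx1 hx2 hx3
      refine evb _ _ ?_ ?_ ?_ ?_ ?_ ?_ ?_ ?_ ?_ ?_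
      · rintro (⟨-, h⟩ | ⟨h, -⟩); exacts [hx1 h, pne_fst haa' h]
      · rintro (⟨-, h⟩ | ⟨h, -⟩); exacts [hx2 h, pne_snd hbbh h]
      · exact not_S (pne_fst haa') (pne_fst haa')
      · exact not_S (pne_snd hbbh) (pne_fst haa')
      · rintro ⟨hg1', (⟨-, h⟩ | ⟨h, -⟩)⟩; exacts [hx3 hg1' h, pne_fst (na1a hg1').symm h]
      · rintro ⟨hg1', (⟨h, -⟩ | ⟨h, -⟩)⟩; exacts [pne_fst (na1a hg1').symm h, pne_snd hbbh h]
      · rintro ⟨-, h⟩; exact not_S (pne_snd hbbh) (pne_snd hbbh) h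
      · rintro ⟨hg2', (⟨h, -⟩ | ⟨h, -⟩)⟩; exacts [pne_fst haa' h, pne_fst (na1'a hg2').symm h]
      · rintro ⟨hg2', (⟨h, -⟩ | ⟨h, -⟩)⟩; exacts [pne_fst (na1'a hg2').symm h, pne_snd hbbh h]
      · rintro ⟨-, h⟩; exact not_S (pne_snd hbbh) (pne_snd hbbh) h
    have char_v : ∀ x, x ≠ (a, b) → x ≠ (a', bh) → (G.Adj a' a1' → x ≠ (a1', b)) →
        val (a', b) x = bc cG cH ι η (a', b) x := by
      intro x hx1 hx2 hx3
      refine evb _ _ ?_ ?_ ?_ ?_ ?_ ?_ ?_ ?_ ?_ ?_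
      · rintro (⟨h, -⟩ | ⟨-, h⟩); exacts [pne_fst haa'.symm h, hx1 h]
      · rintro (⟨h, -⟩ | ⟨h, -⟩); exacts [pne_fst haa'.symm h, pne_fst haa'.symm h]
      · rintro (⟨-, h⟩ | ⟨h, -⟩); exacts [hx2 h, pne_snd hbbh h]
      · exact not_S (pne_fst haa'.symm) (pne_snd hbbh)
      · rintro ⟨hg1', (⟨h, -⟩ | ⟨h, -⟩)⟩
        exacts [pne_fst haa'.symm h, pne_fst (na1v hg1').symm h]
      · rintro ⟨hg1', (⟨h, -⟩ | ⟨h, -⟩)⟩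
        exacts [pne_fst (na1v hg1').symm h, pne_snd hbbh h]
      · rintro ⟨-, h⟩; exact not_S (pne_snd hbbh) (pne_snd hbbh) h
      · rintro ⟨hg2', (⟨-, h⟩ | ⟨h, -⟩)⟩; exacts [hx3 hg2' h, pne_fst (na1'a' hg2').symm h]
      · rintro ⟨hg2', (⟨h, -⟩ | ⟨h, -⟩)⟩
        exacts [pne_fst (na1'a' hg2').symm h, pne_snd hbbh h]
      · rintro ⟨-, h⟩; exact not_S (pne_snd hbbh) (pne_snd hbbh) h
    have char_a : ∀ x, x ≠ (a, b) → x ≠ (a', bh) → (G.Adj a a1 → x ≠ (a1, bh)) →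
        val (a, bh) x = bc cG cH ι η (a, bh) x := by
      intro x hx1 hx2 hx3
      refine evb _ _ ?_ ?_ ?_ ?_ ?_ ?_ ?_ ?_ ?_ ?_
      · rintro (⟨h, -⟩ | ⟨h, -⟩); exacts [pne_snd hbbh.symm h, pne_fst haa' h]
      · rintro (⟨h, -⟩ | ⟨-, h⟩); exacts [pne_snd hbbh.symm h, hx1 h]
      · rintro (⟨h, -⟩ | ⟨h, -⟩); exacts [pne_fst haa' h, pne_fst haa' h]
      · rintro (⟨-, h⟩ | ⟨h, -⟩); exacts [hx2 h, pne_fst haa' h]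
      · rintro ⟨hg1', (⟨h, -⟩ | ⟨h, -⟩)⟩
        exacts [pne_snd hbbh.symm h, pne_fst (na1a hg1').symm h]
      · rintro ⟨hg1', (⟨h, -⟩ | ⟨h, -⟩)⟩
        exacts [pne_fst (na1a hg1').symm h, pne_fst (na1a hg1').symm h]
      · rintro ⟨hg1', (⟨-, h⟩ | ⟨h, -⟩)⟩; exacts [hx3 hg1' h, pne_fst (na1a hg1').symm h]
      · rintro ⟨hg2', (⟨h, -⟩ | ⟨h, -⟩)⟩; exacts [pne_fst haa' h, pne_fst (na1'a hg2').symm h]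
      · rintro ⟨hg2', (⟨h, -⟩ | ⟨h, -⟩)⟩
        exacts [pne_fst (na1'a hg2').symm h, pne_fst (na1'a hg2').symm h]
      · rintro ⟨hg2', (⟨h, -⟩ | ⟨h, -⟩)⟩; exacts [pne_fst haa' h, pne_fst (na1'a hg2').symm h]
    have char_a' : ∀ x, x ≠ (a', b) → x ≠ (a, bh) → (G.Adj a' a1' → x ≠ (a1', bh)) →
        val (a', bh) x = bc cG cH ι η (a', bh) x := by
      intro x hx1 hx2 hx3
      refine evb _ _ ?_ ?_ ?_ ?_ ?_ ?_ ?_ ?_ ?_ ?_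
      · rintro (⟨h, -⟩ | ⟨h, -⟩); exacts [pne_fst haa'.symm h, pne_snd hbbh.symm h]
      · rintro (⟨h, -⟩ | ⟨h, -⟩); exacts [pne_fst haa'.symm h, pne_fst haa'.symm h]
      · rintro (⟨h, -⟩ | ⟨-, h⟩); exacts [pne_snd hbbh.symm h, hx1 h]
      · rintro (⟨h, -⟩ | ⟨-, h⟩); exacts [pne_fst haa'.symm h, hx2 h]
      · rintro ⟨hg1', (⟨h, -⟩ | ⟨h, -⟩)⟩
        exacts [pne_fst haa'.symm h, pne_fst (na1v hg1').symm h]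
      · rintro ⟨hg1', (⟨h, -⟩ | ⟨h, -⟩)⟩
        exacts [pne_fst (na1v hg1').symm h, pne_fst (na1v hg1').symm h]
      · rintro ⟨hg1', (⟨h, -⟩ | ⟨h, -⟩)⟩
        exacts [pne_fst haa'.symm h, pne_fst (na1v hg1').symm h]
      · rintro ⟨hg2', (⟨h, -⟩ | ⟨h, -⟩)⟩
        exacts [pne_snd hbbh.symm h, pne_fst (na1'a' hg2').symm h]
      · rintro ⟨hg2', (⟨h, -⟩ | ⟨h, -⟩)⟩
        exacts [pne_fst (na1'a' hg2').symm h, pne_fst (na1'a' hg2').symm h]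
      · rintro ⟨hg2', (⟨-, h⟩ | ⟨h, -⟩)⟩; exacts [hx3 hg2' h, pne_fst (na1'a' hg2').symm h]
    have char_w1 : G.Adj a a1 → ∀ x, x ≠ (a, b) → x ≠ (a1, bh) →
        val (a1, b) x = bc cG cH ι η (a1, b) x := by
      intro hg1 x hx1 hx2
      refine evb _ _ ?_ ?_ ?_ ?_ ?_ ?_ ?_ ?_ ?_ ?_
      · exact not_S (pne_fst (na1a hg1)) (pne_fst (na1v hg1))
      · rintro (⟨h, -⟩ | ⟨h, -⟩); exacts [pne_fst (na1a hg1) h, pne_fst (na1a hg1) h]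
      · rintro (⟨h, -⟩ | ⟨h, -⟩); exacts [pne_fst (na1v hg1) h, pne_fst (na1v hg1) h]
      · exact not_S (pne_fst (na1a hg1)) (pne_fst (na1v hg1))
      · rintro ⟨-, (⟨h, -⟩ | ⟨-, h⟩)⟩; exacts [pne_fst (na1a hg1) h, hx1 h]
      · rintro ⟨-, (⟨-, h⟩ | ⟨h, -⟩)⟩; exacts [hx2 h, pne_snd hbbh h]
      · rintro ⟨-, h⟩; exact not_S (pne_fst (na1a hg1)) (pne_snd hbbh) h
      · rintro ⟨hg2', (⟨h, -⟩ | ⟨h, -⟩)⟩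
        exacts [pne_fst (na1v hg1) h, pne_fst (na11' hg1 hg2') h]
      · rintro ⟨hg2', (⟨h, -⟩ | ⟨h, -⟩)⟩
        exacts [pne_fst (na11' hg1 hg2') h, pne_fst (na11' hg1 hg2') h]
      · rintro ⟨hg2', (⟨h, -⟩ | ⟨h, -⟩)⟩
        exacts [pne_fst (na1v hg1) h, pne_fst (na11' hg1 hg2') h]
    have char_w1h : G.Adj a a1 → ∀ x, x ≠ (a1, b) → x ≠ (a, bh) →
        val (a1, bh) x = bc cG cH ι η (a1, bh) x := by
      intro hg1 x hx1 hx2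
      refine evb _ _ ?_ ?_ ?_ ?_ ?_ ?_ ?_ ?_ ?_ ?_
      · exact not_S (pne_snd hbbh.symm) (pne_snd hbbh.symm)
      · rintro (⟨h, -⟩ | ⟨h, -⟩); exacts [pne_snd hbbh.symm h, pne_fst (na1a hg1) h]
      · rintro (⟨h, -⟩ | ⟨h, -⟩); exacts [pne_snd hbbh.symm h, pne_fst (na1v hg1) h]
      · exact not_S (pne_fst (na1a hg1)) (pne_fst (na1v hg1))
      · rintro ⟨-, h⟩; exact not_S (pne_snd hbbh.symm) (pne_snd hbbh.symm) h
      · rintro ⟨-, (⟨h, -⟩ | ⟨-, h⟩)⟩; exacts [pne_snd hbbh.symm h, hx1 h]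
      · rintro ⟨-, (⟨h, -⟩ | ⟨-, h⟩)⟩; exacts [pne_fst (na1a hg1) h, hx2 h]
      · rintro ⟨-, h⟩; exact not_S (pne_snd hbbh.symm) (pne_snd hbbh.symm) h
      · rintro ⟨hg2', (⟨h, -⟩ | ⟨h, -⟩)⟩
        exacts [pne_snd hbbh.symm h, pne_fst (na11' hg1 hg2') h]
      · rintro ⟨hg2', (⟨h, -⟩ | ⟨h, -⟩)⟩
        exacts [pne_fst (na1v hg1) h, pne_fst (na11' hg1 hg2') h]
    have char_w2 : G.Adj a' a1' → ∀ x, x ≠ (a', b) → x ≠ (a1', bh) →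
        val (a1', b) x = bc cG cH ι η (a1', b) x := by
      intro hg2 x hx1 hx2
      refine evb _ _ ?_ ?_ ?_ ?_ ?_ ?_ ?_ ?_ ?_ ?_
      · exact not_S (pne_fst (na1'a hg2)) (pne_fst (na1'a' hg2))
      · rintro (⟨h, -⟩ | ⟨h, -⟩); exacts [pne_fst (na1'a hg2) h, pne_fst (na1'a hg2) h]
      · rintro (⟨h, -⟩ | ⟨h, -⟩); exacts [pne_fst (na1'a' hg2) h, pne_fst (na1'a' hg2) h]
      · exact not_S (pne_fst (na1'a hg2)) (pne_fst (na1'a' hg2))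
      · rintro ⟨hg1', (⟨h, -⟩ | ⟨h, -⟩)⟩
        exacts [pne_fst (na1'a hg2) h, pne_fst (na11' hg1' hg2).symm h]
      · rintro ⟨hg1', (⟨h, -⟩ | ⟨h, -⟩)⟩
        exacts [pne_fst (na11' hg1' hg2).symm h, pne_fst (na11' hg1' hg2).symm h]
      · rintro ⟨hg1', (⟨h, -⟩ | ⟨h, -⟩)⟩
        exacts [pne_fst (na1'a hg2) h, pne_fst (na11' hg1' hg2).symm h]
      · rintro ⟨-, (⟨h, -⟩ | ⟨-, h⟩)⟩; exacts [pne_fst (na1'a' hg2) h, hx1 h]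
      · rintro ⟨-, (⟨-, h⟩ | ⟨h, -⟩)⟩; exacts [hx2 h, pne_snd hbbh h]
      · rintro ⟨-, h⟩; exact not_S (pne_fst (na1'a' hg2)) (pne_snd hbbh) h
    have char_w2h : G.Adj a' a1' → ∀ x, x ≠ (a1', b) → x ≠ (a', bh) →
        val (a1', bh) x = bc cG cH ι η (a1', bh) x := by
      intro hg2 x hx1 hx2
      refine evb _ _ ?_ ?_ ?_ ?_ ?_ ?_ ?_ ?_ ?_ ?_
      · exact not_S (pne_snd hbbh.symm) (pne_snd hbbh.symm)
      · rintro (⟨h, -⟩ | ⟨h, -⟩); exacts [pne_snd hbbh.symm h, pne_fst (na1'a hg2) h]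
      · rintro (⟨h, -⟩ | ⟨h, -⟩); exacts [pne_snd hbbh.symm h, pne_fst (na1'a' hg2) h]
      · exact not_S (pne_fst (na1'a hg2)) (pne_fst (na1'a' hg2))
      · rintro ⟨hg1', h⟩; exact not_S (pne_snd hbbh.symm) (pne_snd hbbh.symm) h
      · rintro ⟨hg1', (⟨h, -⟩ | ⟨h, -⟩)⟩
        exacts [pne_snd hbbh.symm h, pne_fst (na11' hg1' hg2).symm h]
      · rintro ⟨hg1', (⟨h, -⟩ | ⟨h, -⟩)⟩
        exacts [pne_fst (na1'a hg2) h, pne_fst (na11' hg1' hg2).symm h]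
      · rintro ⟨-, h⟩; exact not_S (pne_snd hbbh.symm) (pne_snd hbbh.symm) h
      · rintro ⟨-, (⟨h, -⟩ | ⟨-, h⟩)⟩; exacts [pne_snd hbbh.symm h, hx1 h]
      · rintro ⟨-, (⟨h, -⟩ | ⟨-, h⟩)⟩; exacts [pne_fst (na1'a' hg2) h, hx2 h]
    have htne : ι t' ≠ ι (cG a a') := fun h => hts (hg.iinj h)
    intro z x y hzx hzy hxy
    by_cases hz1 : z = (a, b)
    · subst hz1
      by_cases hg1 : G.Adj a a1
      · refine at3 (K := G □ H) (val (a, b)) (bc cG cH ι η (a, b)) (a, b)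
          (a', b) (a, bh) (a1, b) (ι t') (ι (cG a a')) (η (cH b bh))
          (ev1 _ _ (S_rfl _ _)) (ev2 _ _ (S_rfl _ _)) (ev5 _ _ hg1 (S_rfl _ _))
          (fun x hx e1 e2 e3 => char_u x e1 e2 (fun _ => e3))
          (fun x hx e1 e2 e3 => hbcu_t x hx e1 (fun _ => e3))
          (fun x hx e1 e2 e3 => hbcu_s x hx e1)
          (fun x hx e1 e2 e3 => hbcu_h x hx e2)
          (fun x y hx hy hne => bc_proper hg (a, b) x y hx hy hne)
          htne (hg.disj _ _) (hg.disj _ _) x y hzx hzy hxy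
      · refine at2 (K := G □ H) (val (a, b)) (bc cG cH ι η (a, b)) (a, b)
          (a', b) (a, bh) (ι t') (ι (cG a a'))
          (ev1 _ _ (S_rfl _ _)) (ev2 _ _ (S_rfl _ _))
          (fun x hx e1 e2 => char_u x e1 e2 (fun hgg1 => absurd hgg1 hg1))
          (fun x hx e1 e2 => hbcu_t x hx e1 (fun hgg1 => absurd hgg1 hg1))
          (fun x hx e1 e2 => hbcu_s x hx e1)
          (fun x y hx hy hne => bc_proper hg (a, b) x y hx hy hne)
          htne x y hzx hzy hxy
    by_cases hz2 : z = (a', b)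
    · subst hz2
      by_cases hg2 : G.Adj a' a1'
      · refine at3 (K := G □ H) (val (a', b)) (bc cG cH ι η (a', b)) (a', b)
          (a, b) (a', bh) (a1', b) (ι t') (ι (cG a a')) (η (cH b bh))
          (ev1 _ _ (S_swap (S_rfl _ _))) (ev3 _ _ (S_rfl _ _)) (ev8 _ _ hg2 (S_rfl _ _))
          (fun x hx e1 e2 e3 => char_v x e1 e2 (fun _ => e3))
          (fun x hx e1 e2 e3 => hbcv_t x hx e1 (fun _ => e3))
          (fun x hx e1 e2 e3 => hbcv_s x hx e1)
          (fun x hx e1 e2 e3 => hbcv_h x hx e2)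
          (fun x y hx hy hne => bc_proper hg (a', b) x y hx hy hne)
          htne (hg.disj _ _) (hg.disj _ _) x y hzx hzy hxy
      · refine at2 (K := G □ H) (val (a', b)) (bc cG cH ι η (a', b)) (a', b)
          (a, b) (a', bh) (ι t') (ι (cG a a'))
          (ev1 _ _ (S_swap (S_rfl _ _))) (ev3 _ _ (S_rfl _ _))
          (fun x hx e1 e2 => char_v x e1 e2 (fun hgg2 => absurd hgg2 hg2))
          (fun x hx e1 e2 => hbcv_t x hx e1 (fun hgg2 => absurd hgg2 hg2))
          (fun x hx e1 e2 => hbcv_s x hx e1)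
          (fun x y hx hy hne => bc_proper hg (a', b) x y hx hy hne)
          htne x y hzx hzy hxy
    by_cases hz3 : z = (a, bh)
    · subst hz3
      by_cases hg1 : G.Adj a a1
      · refine at3 (K := G □ H) (val (a, bh)) (bc cG cH ι η (a, bh)) (a, bh)
          (a, b) (a', bh) (a1, bh) (ι (cG a a')) (ι t') (η (cH b bh))
          (ev2 _ _ (S_swap (S_rfl _ _))) (ev4 _ _ (S_rfl _ _)) (ev7 _ _ hg1 (S_rfl _ _))
          (fun x hx e1 e2 e3 => char_a x e1 e2 (fun _ => e3))
          (fun x hx e1 e2 e3 => hbca_s x hx e2)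
          (fun x hx e1 e2 e3 => hbca_t x hx (fun _ => e3))
          (fun x hx e1 e2 e3 => hbca_h x hx e1)
          (fun x y hx hy hne => bc_proper hg (a, bh) x y hx hy hne)
          htne.symm (hg.disj _ _) (hg.disj _ _) x y hzx hzy hxy
      · refine at2 (K := G □ H) (val (a, bh)) (bc cG cH ι η (a, bh)) (a, bh)
          (a, b) (a', bh) (ι (cG a a')) (ι t')
          (ev2 _ _ (S_swap (S_rfl _ _))) (ev4 _ _ (S_rfl _ _))
          (fun x hx e1 e2 => char_a x e1 e2 (fun hgg1 => absurd hgg1 hg1))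
          (fun x hx e1 e2 => hbca_s x hx e2)
          (fun x hx e1 e2 => hbca_t x hx (fun hgg1 => absurd hgg1 hg1))
          (fun x y hx hy hne => bc_proper hg (a, bh) x y hx hy hne)
          htne.symm x y hzx hzy hxy
    by_cases hz4 : z = (a', bh)
    · subst hz4
      by_cases hg2 : G.Adj a' a1'
      · refine at3 (K := G □ H) (val (a', bh)) (bc cG cH ι η (a', bh)) (a', bh)
          (a', b) (a, bh) (a1', bh) (ι (cG a a')) (ι t') (η (cH b bh))
          (ev3 _ _ (S_swap (S_rfl _ _))) (ev4 _ _ (S_swap (S_rfl _ _))) (ev10 _ _ hg2 (S_rfl _ _))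
          (fun x hx e1 e2 e3 => char_a' x e1 e2 (fun _ => e3))
          (fun x hx e1 e2 e3 => hbca'_s x hx e2)
          (fun x hx e1 e2 e3 => hbca'_t x hx (fun _ => e3))
          (fun x hx e1 e2 e3 => hbca'_h x hx e1)
          (fun x y hx hy hne => bc_proper hg (a', bh) x y hx hy hne)
          htne.symm (hg.disj _ _) (hg.disj _ _) x y hzx hzy hxy
      · refine at2 (K := G □ H) (val (a', bh)) (bc cG cH ι η (a', bh)) (a', bh)
          (a', b) (a, bh) (ι (cG a a')) (ι t')
          (ev3 _ _ (S_swap (S_rfl _ _))) (ev4 _ _ (S_swap (S_rfl _ _)))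
          (fun x hx e1 e2 => char_a' x e1 e2 (fun hgg2 => absurd hgg2 hg2))
          (fun x hx e1 e2 => hbca'_s x hx e2)
          (fun x hx e1 e2 => hbca'_t x hx (fun hgg2 => absurd hgg2 hg2))
          (fun x y hx hy hne => bc_proper hg (a', bh) x y hx hy hne)
          htne.symm x y hzx hzy hxy
    by_cases hz5 : G.Adj a a1 ∧ z = (a1, b)
    · obtain ⟨hg1, rfl⟩ := hz5
      refine at2 (K := G □ H) (val (a1, b)) (bc cG cH ι η (a1, b)) (a1, b)
        (a, b) (a1, bh) (η (cH b bh)) (ι t')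
        (ev5 _ _ hg1 (S_swap (S_rfl _ _))) (ev6 _ _ hg1 (S_rfl _ _))
        (fun x hx e1 e2 => char_w1 hg1 x e1 e2)
        (fun x hx e1 e2 => hbcw1_h x hx e2)
        (fun x hx e1 e2 => hbcw1_t hg1 x hx e1)
        (fun x y hx hy hne => bc_proper hg (a1, b) x y hx hy hne)
        (fun h => hg.disj _ _ h.symm) x y hzx hzy hxy
    by_cases hz6 : G.Adj a a1 ∧ z = (a1, bh)
    · obtain ⟨hg1, rfl⟩ := hz6
      refine at2 (K := G □ H) (val (a1, bh)) (bc cG cH ι η (a1, bh)) (a1, bh)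
        (a1, b) (a, bh) (ι t') (η (cH b bh))
        (ev6 _ _ hg1 (S_swap (S_rfl _ _))) (ev7 _ _ hg1 (S_swap (S_rfl _ _)))
        (fun x hx e1 e2 => char_w1h hg1 x e1 e2)
        (fun x hx e1 e2 => hbcw1h_t hg1 x hx e2)
        (fun x hx e1 e2 => hbcw1h_h x hx e1)
        (fun x y hx hy hne => bc_proper hg (a1, bh) x y hx hy hne)
        (hg.disj _ _) x y hzx hzy hxy
    by_cases hz7 : G.Adj a' a1' ∧ z = (a1', b)
    · obtain ⟨hg2, rfl⟩ := hz7
      refine at2 (K := G □ H) (val (a1', b)) (bc cG cH ι η (a1', b)) (a1', b)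
        (a', b) (a1', bh) (η (cH b bh)) (ι t')
        (ev8 _ _ hg2 (S_swap (S_rfl _ _))) (ev9 _ _ hg2 (S_rfl _ _))
        (fun x hx e1 e2 => char_w2 hg2 x e1 e2)
        (fun x hx e1 e2 => hbcw2_h x hx e2)
        (fun x hx e1 e2 => hbcw2_t hg2 x hx e1)
        (fun x y hx hy hne => bc_proper hg (a1', b) x y hx hy hne)
        (fun h => hg.disj _ _ h.symm) x y hzx hzy hxy
    by_cases hz8 : G.Adj a' a1' ∧ z = (a1', bh)
    · obtain ⟨hg2, rfl⟩ := hz8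
      refine at2 (K := G □ H) (val (a1', bh)) (bc cG cH ι η (a1', bh)) (a1', bh)
        (a1', b) (a', bh) (ι t') (η (cH b bh))
        (ev9 _ _ hg2 (S_swap (S_rfl _ _))) (ev10 _ _ hg2 (S_swap (S_rfl _ _)))
        (fun x hx e1 e2 => char_w2h hg2 x e1 e2)
        (fun x hx e1 e2 => hbcw2h_t hg2 x hx e2)
        (fun x hx e1 e2 => hbcw2h_h x hx e1)
        (fun x y hx hy hne => bc_proper hg (a1', bh) x y hx hy hne)
        (hg.disj _ _) x y hzx hzy hxy
    · -- z untouched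
      have hfar : ∀ x, val z x = bc cG cH ι η z x := by
        intro x
        refine evb _ _ (not_S hz1 hz2) (not_S hz1 hz3) (not_S hz2 hz4) (not_S hz3 hz4)
          ?_ ?_ ?_ ?_ ?_ ?_
        · rintro ⟨hg1', (⟨h, -⟩ | ⟨h, -⟩)⟩; exacts [hz1 h, hz5 ⟨hg1', h⟩]
        · rintro ⟨hg1', (⟨h, -⟩ | ⟨h, -⟩)⟩; exacts [hz5 ⟨hg1', h⟩, hz6 ⟨hg1', h⟩]
        · rintro ⟨hg1', (⟨h, -⟩ | ⟨h, -⟩)⟩; exacts [hz3 h, hz6 ⟨hg1', h⟩]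
        · rintro ⟨hg2', (⟨h, -⟩ | ⟨h, -⟩)⟩; exacts [hz2 h, hz7 ⟨hg2', h⟩]
        · rintro ⟨hg2', (⟨h, -⟩ | ⟨h, -⟩)⟩; exacts [hz7 ⟨hg2', h⟩, hz8 ⟨hg2', h⟩]
        · rintro ⟨hg2', (⟨h, -⟩ | ⟨h, -⟩)⟩; exacts [hz4 h, hz8 ⟨hg2', h⟩]
      rw [hfar x, hfar y]
      exact bc_proper hg z x y hzx hzy hxy
  · -- description
    intro p q hne
    have hWu : W1 G H (a, b) (a', b) (a, b) := Or.inl rfl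
    have hWv : W1 G H (a, b) (a', b) (a', b) := Or.inr (Or.inl rfl)
    have hWa : W1 G H (a, b) (a', b) (a, bh) :=
      Or.inr (Or.inr (Or.inl (boxProd_adj_right.mpr hbb)))
    have hWa' : W1 G H (a, b) (a', b) (a', bh) :=
      Or.inr (Or.inr (Or.inr (boxProd_adj_right.mpr hbb)))
    have hWall : ∀ c d, S p q c d → W1 G H (a, b) (a', b) c →
        (W1 G H (a, b) (a', b) d ∨ SH G H cG ι (a, b) (a', b) d (val p q) ∨
          SG' G H cH η (a, b) (a', b) d (val p q)) →
        (∃ w, (w = p ∨ w = q) ∧ W1 G H (a, b) (a', b) w) ∧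
          ∀ w, w = p ∨ w = q → W1 G H (a, b) (a', b) w ∨
            SH G H cG ι (a, b) (a', b) w (val p q) ∨
            SG' G H cH η (a, b) (a', b) w (val p q) := by
      intro c d h hc hd
      constructor
      · rcases h with ⟨rfl, rfl⟩ | ⟨rfl, rfl⟩
        · exact ⟨p, Or.inl rfl, hc⟩
        · exact ⟨q, Or.inr rfl, hc⟩
      · rcases h with ⟨rfl, rfl⟩ | ⟨rfl, rfl⟩ <;> rintro w (rfl | rfl)
        exacts [Or.inl hc, hd, hd, Or.inl hc]
    by_cases h1 : S p q (a, b) (a', b)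
    · refine ⟨?_, hWall _ _ h1 hWu (Or.inl hWv)⟩
      rcases h1 with ⟨rfl, rfl⟩ | ⟨rfl, rfl⟩
      · exact boxProd_adj_left.mpr hA
      · exact (boxProd_adj_left.mpr hA).symm
    by_cases h2 : S p q (a, b) (a, bh)
    · refine ⟨?_, hWall _ _ h2 hWu (Or.inl hWa)⟩
      rcases h2 with ⟨rfl, rfl⟩ | ⟨rfl, rfl⟩
      · exact boxProd_adj_right.mpr hbb
      · exact (boxProd_adj_right.mpr hbb).symm
    by_cases h3 : S p q (a', b) (a', bh)
    · refine ⟨?_, hWall _ _ h3 hWv (Or.inl hWa')⟩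
      rcases h3 with ⟨rfl, rfl⟩ | ⟨rfl, rfl⟩
      · exact boxProd_adj_right.mpr hbb
      · exact (boxProd_adj_right.mpr hbb).symm
    by_cases h4 : S p q (a, bh) (a', bh)
    · refine ⟨?_, hWall _ _ h4 hWa (Or.inl hWa')⟩
      rcases h4 with ⟨rfl, rfl⟩ | ⟨rfl, rfl⟩
      · exact boxProd_adj_left.mpr hA
      · exact (boxProd_adj_left.mpr hA).symm
    by_cases h5 : G.Adj a a1 ∧ S p q (a, b) (a1, b)
    · obtain ⟨hg1, hS⟩ := h5
      refine ⟨?_, hWall _ _ hS hWu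
        (Or.inl (Or.inr (Or.inr (Or.inl (boxProd_adj_left.mpr hg1)))))⟩
      rcases hS with ⟨rfl, rfl⟩ | ⟨rfl, rfl⟩
      · exact boxProd_adj_left.mpr hg1
      · exact (boxProd_adj_left.mpr hg1).symm
    by_cases h6 : G.Adj a a1 ∧ S p q (a1, b) (a1, bh)
    · obtain ⟨hg1, hS⟩ := h6
      refine ⟨?_, hWall _ _ hS
        (Or.inr (Or.inr (Or.inl (boxProd_adj_left.mpr hg1))))
        (Or.inr (Or.inl ⟨a, b, Or.inl rfl, hg1, hbb,
          (ev6 p q hg1 hS).trans (congrArg ι (h1c hg1).symm)⟩))⟩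
      rcases hS with ⟨rfl, rfl⟩ | ⟨rfl, rfl⟩
      · exact boxProd_adj_right.mpr hbb
      · exact (boxProd_adj_right.mpr hbb).symm
    by_cases h7 : G.Adj a a1 ∧ S p q (a, bh) (a1, bh)
    · obtain ⟨hg1, hS⟩ := h7
      refine ⟨?_, hWall _ _ hS hWa
        (Or.inr (Or.inr ⟨a, b, Or.inl rfl, hg1, hbb, ev7 p q hg1 hS⟩))⟩
      rcases hS with ⟨rfl, rfl⟩ | ⟨rfl, rfl⟩
      · exact boxProd_adj_left.mpr hg1
      · exact (boxProd_adj_left.mpr hg1).symm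
    by_cases h8 : G.Adj a' a1' ∧ S p q (a', b) (a1', b)
    · obtain ⟨hg2, hS⟩ := h8
      refine ⟨?_, hWall _ _ hS hWv
        (Or.inl (Or.inr (Or.inr (Or.inr (boxProd_adj_left.mpr hg2)))))⟩
      rcases hS with ⟨rfl, rfl⟩ | ⟨rfl, rfl⟩
      · exact boxProd_adj_left.mpr hg2
      · exact (boxProd_adj_left.mpr hg2).symm
    by_cases h9 : G.Adj a' a1' ∧ S p q (a1', b) (a1', bh)
    · obtain ⟨hg2, hS⟩ := h9
      refine ⟨?_, hWall _ _ hS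
        (Or.inr (Or.inr (Or.inr (boxProd_adj_left.mpr hg2))))
        (Or.inr (Or.inl ⟨a', b, Or.inr rfl, hg2, hbb,
          (ev9 p q hg2 hS).trans (congrArg ι (h2c hg2).symm)⟩))⟩
      rcases hS with ⟨rfl, rfl⟩ | ⟨rfl, rfl⟩
      · exact boxProd_adj_right.mpr hbb
      · exact (boxProd_adj_right.mpr hbb).symm
    by_cases h10 : G.Adj a' a1' ∧ S p q (a', bh) (a1', bh)
    · obtain ⟨hg2, hS⟩ := h10
      refine ⟨?_, hWall _ _ hS hWa'
        (Or.inr (Or.inr ⟨a', b, Or.inr rfl, hg2, hbb, ev10 p q hg2 hS⟩))⟩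
      rcases hS with ⟨rfl, rfl⟩ | ⟨rfl, rfl⟩
      · exact boxProd_adj_left.mpr hg2
      · exact (boxProd_adj_left.mpr hg2).symm
    · exact absurd (evb _ _ h1 h2 h3 h4 h5 h6 h7 h8 h9 h10) hne

/-- dispatcher: a local recoloring exists for any `G`-type edge and any target color. -/
theorem coreG (hg : Good G H cG cH ι η) (hFH : Nonempty FH) {a a' : α} {b : β}
    (hA : G.Adj a a') (t : C) (ht : (∃ x, t = ι x) ∨ ∃ y, t = η y) :
    ∃ val, Out G H cG cH ι η (a, b) (a', b) t val := by
  classical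
  rcases ht with ⟨t', rfl⟩ | ⟨t'', rfl⟩
  · by_cases hts : t' = cG a a'
    · rw [hts]
      exact schemeT hg hA
    · obtain ⟨a1, h1c, h1u⟩ : ∃ a1, (G.Adj a a1 → cG a a1 = t') ∧
          (∀ w, G.Adj a w → cG a w = t' → w = a1) := by
        by_cases hx : ∃ w, G.Adj a w ∧ cG a w = t'
        · obtain ⟨w0, hw0, hcw0⟩ := hx
          exact ⟨w0, fun _ => hcw0, fun w hw hc => hg.guniq hw hw0 (hc.trans hcw0.symm)⟩
        · exact ⟨a, fun hadj => absurd hadj (G.loopless.irrefl a),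
            fun w hw hc => absurd ⟨w, hw, hc⟩ hx⟩
      obtain ⟨a1', h2c, h2u⟩ : ∃ a1', (G.Adj a' a1' → cG a' a1' = t') ∧
          (∀ w, G.Adj a' w → cG a' w = t' → w = a1') := by
        by_cases hx : ∃ w, G.Adj a' w ∧ cG a' w = t'
        · obtain ⟨w0, hw0, hcw0⟩ := hx
          exact ⟨w0, fun _ => hcw0, fun w hw hc => hg.guniq hw hw0 (hc.trans hcw0.symm)⟩
        · exact ⟨a', fun hadj => absurd hadj (G.loopless.irrefl a'),
            fun w hw hc => absurd ⟨w, hw, hc⟩ hx⟩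
      by_cases hbH : ∃ y, H.Adj b y
      · obtain ⟨bh, hbh⟩ := hbH
        exact schemeA1 hg hA hbh t' hts h1c h1u h2c h2u
      · obtain ⟨h0⟩ := hFH
        exact schemeA0 hg hA t' hts h0 (fun y hy => hbH ⟨y, hy⟩) h1c h1u h2c h2u
  · by_cases hbt : ∃ y, H.Adj b y ∧ cH b y = t''
    · obtain ⟨b1, hb1, hcb1⟩ := hbt
      exact schemeB1 hg hA hb1 t'' hcb1
        (fun y hy hc => hg.huniq hy hb1 (hc.trans hcb1.symm))
    · exact schemeB0 hg hA t'' (fun y hy hc => hbt ⟨y, hy, hc⟩)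

end Schemes

/-! ### distance helpers -/

section Dist

variable {V : Type*} {K : SimpleGraph V}

/-- one step: equal or adjacent -/
def Step (K : SimpleGraph V) (x y : V) : Prop := x = y ∨ K.Adj x y

lemma Step.edist_le {x y : V} (h : Step K x y) : K.edist x y ≤ 1 := by
  rcases h with rfl | h
  · simp [SimpleGraph.edist_self]
  · rw [SimpleGraph.edist_eq_one_iff_adj.mpr h]

lemma Step.symm {x y : V} (h : Step K x y) : Step K y x := by
  rcases h with rfl | h
  · exact Or.inl rfl
  · exact Or.inr h.symm

/-- no chain of three steps between points at distance ≥ 4 -/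
lemma chain3_absurd {x w w' y : V} (h4 : (4 : ℕ∞) ≤ K.edist x y)
    (h1 : Step K x w) (h2 : Step K w w') (h3 : Step K w' y) : False := by
  have e1 := h1.edist_le
  have e2 := h2.edist_le
  have e3 := h3.edist_le
  have t1 : K.edist x y ≤ K.edist x w + K.edist w w' + K.edist w' y := by
    calc K.edist x y ≤ K.edist x w' + K.edist w' y := SimpleGraph.edist_triangle
    _ ≤ (K.edist x w + K.edist w w') + K.edist w' y := by
        exact add_le_add_left SimpleGraph.edist_triangle _
  have : (4 : ℕ∞) ≤ 3 := by
    calc (4 : ℕ∞) ≤ K.edist x y := h4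
    _ ≤ K.edist x w + K.edist w w' + K.edist w' y := t1
    _ ≤ 1 + 1 + 1 := by
        exact add_le_add (add_le_add e1 e2) e3
    _ = 3 := by norm_num
  norm_num at this

end Dist

/-! ### glue-level interface -/

section Glue

variable (G H cG cH ι η)

/-- `w` is within distance 1 of the edge `e` -/
def W1e (e : Sym2 (α × β)) (w : α × β) : Prop := ∃ z₀, z₀ ∈ e ∧ Step (G □ H) z₀ w

def SHe (e : Sym2 (α × β)) (w : α × β) (c : C) : Prop :=
  ∃ x₀ y₀, (x₀, y₀) ∈ e ∧ G.Adj x₀ w.1 ∧ H.Adj y₀ w.2 ∧ c = ι (cG x₀ w.1)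

def SGe (e : Sym2 (α × β)) (w : α × β) (c : C) : Prop :=
  ∃ x₀ y₀, (x₀, y₀) ∈ e ∧ G.Adj x₀ w.1 ∧ H.Adj y₀ w.2 ∧ c = η (cH y₀ w.2)

def OutE (t : C) (e : Sym2 (α × β)) (val : α × β → α × β → C) : Prop :=
  (∀ p q, val p q = val q p) ∧ PProp G H val ∧ (∀ x y, s(x, y) = e → val x y = t) ∧
    ∀ p q, val p q ≠ bc cG cH ι η p q →
      (G □ H).Adj p q ∧ (∃ w, (w = p ∨ w = q) ∧ W1e G H e w) ∧
        ∀ w, w = p ∨ w = q →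
          W1e G H e w ∨ SHe G H cG ι e w (val p q) ∨ SGe G H cH η e w (val p q)

variable {G H cG cH ι η}

lemma OutE_of_Out (hg : Good G H cG cH ι η) {a a' : α} {b : β} {t : C}
    {val : α × β → α × β → C} (hOut : Out G H cG cH ι η (a, b) (a', b) t val) :
    OutE G H cG cH ι η t s((a, b), (a', b)) val := by
  obtain ⟨hsym, hprop, hval, hdesc⟩ := hOut
  have mapW1 : ∀ w, W1 G H (a, b) (a', b) w → W1e G H s((a, b), (a', b)) w := by
    rintro w (rfl | rfl | hA1 | hA2)
    · exact ⟨(a, b), Sym2.mem_mk_left _ _, Or.inl rfl⟩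
    · exact ⟨(a', b), Sym2.mem_mk_right _ _, Or.inl rfl⟩
    · exact ⟨(a, b), Sym2.mem_mk_left _ _, Or.inr hA1⟩
    · exact ⟨(a', b), Sym2.mem_mk_right _ _, Or.inr hA2⟩
  refine ⟨hsym, hprop, ?_, ?_⟩
  · intro x y hxy
    rcases Sym2.eq_iff.mp hxy with ⟨rfl, rfl⟩ | ⟨rfl, rfl⟩
    · exact hval
    · exact (hsym _ _).trans hval
  · intro p q hne
    obtain ⟨hadj, ⟨w, hw, hW⟩, hall⟩ := hdesc p q hne
    refine ⟨hadj, ⟨w, hw, mapW1 w hW⟩, ?_⟩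
    intro w' hw'
    rcases hall w' hw' with h | h | h
    · exact Or.inl (mapW1 _ h)
    · obtain ⟨x₀, y₀, hm, h1, h2, h3⟩ := h
      refine Or.inr (Or.inl ⟨x₀, y₀, ?_, h1, h2, h3⟩)
      rcases hm with hh | hh
      · exact hh ▸ Sym2.mem_mk_left _ _
      · exact hh ▸ Sym2.mem_mk_right _ _
    · obtain ⟨x₀, y₀, hm, h1, h2, h3⟩ := h
      refine Or.inr (Or.inr ⟨x₀, y₀, ?_, h1, h2, h3⟩)
      rcases hm with hh | hh
      · exact hh ▸ Sym2.mem_mk_left _ _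
      · exact hh ▸ Sym2.mem_mk_right _ _

lemma adj_swap {p q : α × β} : (G □ H).Adj p q ↔ (H □ G).Adj p.swap q.swap := by
  rw [boxProd_adj, boxProd_adj]
  simp only [Prod.fst_swap, Prod.snd_swap]
  exact or_comm

lemma bc_swap {p q : α × β} (h : (G □ H).Adj p q) :
    bc cH cG η ι (C := C) p.swap q.swap = bc cG cH ι η p q := by
  rcases boxProd_adj.mp h with ⟨hG1, he⟩ | ⟨hH1, he⟩
  · rw [bc_H (show (p.swap).2 ≠ (q.swap).2 from hG1.ne), bc_G he]
    rfl
  · rw [bc_G (show (p.swap).2 = (q.swap).2 from he), bc_H hH1.ne]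
    rfl

lemma OutE_of_Out_swap (hg : Good G H cG cH ι η) {a : α} {b b' : β}
    (hH : H.Adj b b') {t : C} {valm : β × α → β × α → C}
    (hOut : Out H G cH cG η ι (b, a) (b', a) t valm) :
    ∃ val, OutE G H cG cH ι η t s((a, b), (a, b')) val := by
  classical
  obtain ⟨hsymm, hpropm, hvalm, hdescm⟩ := hOut
  set val : (α × β) → (α × β) → C := fun p q =>
    if (G □ H).Adj p q then valm p.swap q.swap else bc cG cH ι η p q with hvdef
  have hvadj : ∀ p q, (G □ H).Adj p q → val p q = valm p.swap q.swap := by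
    intro p q h; simp only [hvdef]; rw [if_pos h]
  have hvnadj : ∀ p q, ¬ (G □ H).Adj p q → val p q = bc cG cH ι η p q := by
    intro p q h; simp only [hvdef]; rw [if_neg h]
  have mapW1 : ∀ w : α × β, W1 H G (b, a) (b', a) w.swap →
      W1e G H s((a, b), (a, b')) w := by
    intro w hW
    rcases hW with h | h | h | h
    · refine ⟨(a, b), Sym2.mem_mk_left _ _, Or.inl ?_⟩
      have := congrArg Prod.swap h
      rw [Prod.swap_swap] at this
      exact this.symm
    · refine ⟨(a, b'), Sym2.mem_mk_right _ _, Or.inl ?_⟩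
      have := congrArg Prod.swap h
      rw [Prod.swap_swap] at this
      exact this.symm
    · exact ⟨(a, b), Sym2.mem_mk_left _ _, Or.inr (adj_swap.mpr h)⟩
    · exact ⟨(a, b'), Sym2.mem_mk_right _ _, Or.inr (adj_swap.mpr h)⟩
  refine ⟨val, ?_, ?_, ?_, ?_⟩
  · intro p q
    by_cases h : (G □ H).Adj p q
    · rw [hvadj p q h, hvadj q p h.symm, hsymm]
    · rw [hvnadj p q h, hvnadj q p (fun hh => h hh.symm), bc_symm hg]
  · intro z x y hzx hzy hxy
    rw [hvadj z x hzx, hvadj z y hzy]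
    exact hpropm z.swap x.swap y.swap (adj_swap.mp hzx) (adj_swap.mp hzy)
      (fun hh => hxy (Prod.swap_injective hh))
  · intro x y hxy
    rcases Sym2.eq_iff.mp hxy with ⟨rfl, rfl⟩ | ⟨rfl, rfl⟩
    · rw [hvadj _ _ (boxProd_adj_right.mpr hH)]
      exact hvalm
    · rw [hvadj _ _ (boxProd_adj_right.mpr hH).symm]
      exact (hsymm _ _).trans hvalm
  · intro p q hne
    by_cases hadj : (G □ H).Adj p q
    case neg => exact absurd (hvnadj p q hadj) hne
    have hnem : valm p.swap q.swap ≠ bc cH cG η ι p.swap q.swap := by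
      rw [bc_swap hadj, ← hvadj p q hadj]
      exact hne
    obtain ⟨-, ⟨wm, hwm, hWm⟩, hallm⟩ := hdescm p.swap q.swap hnem
    refine ⟨hadj, ⟨wm.swap, ?_, mapW1 _ (by rw [Prod.swap_swap]; exact hWm)⟩, ?_⟩
    · rcases hwm with h | h
      · exact Or.inl (by rw [h, Prod.swap_swap])
      · exact Or.inr (by rw [h, Prod.swap_swap])
    · intro w hw
      have hw' : w.swap = p.swap ∨ w.swap = q.swap := by
        rcases hw with rfl | rfl
        exacts [Or.inl rfl, Or.inr rfl]
      rcases hallm w.swap hw' with h | h | h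
      · exact Or.inl (mapW1 w h)
      · obtain ⟨x₀, y₀, hm, h1, h2, h3⟩ := h
        refine Or.inr (Or.inr ⟨y₀, x₀, ?_, h2, h1, (hvadj p q hadj).trans h3⟩)
        rcases hm with hh | hh
        · obtain ⟨rfl⟩ : x₀ = b := congrArg Prod.fst hh
          obtain ⟨rfl⟩ : y₀ = a := congrArg Prod.snd hh
          exact Sym2.mem_mk_left _ _
        · obtain ⟨rfl⟩ : x₀ = b' := congrArg Prod.fst hh
          obtain ⟨rfl⟩ : y₀ = a := congrArg Prod.snd hh
          exact Sym2.mem_mk_right _ _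
      · obtain ⟨x₀, y₀, hm, h1, h2, h3⟩ := h
        refine Or.inr (Or.inl ⟨y₀, x₀, ?_, h2, h1, (hvadj p q hadj).trans h3⟩)
        rcases hm with hh | hh
        · obtain ⟨rfl⟩ : x₀ = b := congrArg Prod.fst hh
          obtain ⟨rfl⟩ : y₀ = a := congrArg Prod.snd hh
          exact Sym2.mem_mk_left _ _
        · obtain ⟨rfl⟩ : x₀ = b' := congrArg Prod.fst hh
          obtain ⟨rfl⟩ : y₀ = a := congrArg Prod.snd hh
          exact Sym2.mem_mk_right _ _

end Glue


section Combine

variable {G : SimpleGraph α} {H : SimpleGraph β} {cG : α → α → FG} {cH : β → β → FH}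
  {ι : FG → C} {η : FH → C}

theorem combine (hg : Good G H cG cH ι η)
    (E₀ : Set (Sym2 (α × β))) (φc : Sym2 (α × β) → C)
    (hdist : ∀ e ∈ E₀, ∀ f ∈ E₀, e ≠ f → ∀ x ∈ e, ∀ y ∈ f, (4 : ℕ∞) ≤ (G □ H).edist x y)
    (valF : {e // e ∈ E₀} → (α × β) → (α × β) → C)
    (hvalF : ∀ e : {e // e ∈ E₀}, OutE G H cG cH ι η (φc e.1) e.1 (valF e)) :
    ∃ Cp : (α × β) → (α × β) → C, (∀ p q, Cp p q = Cp q p) ∧ PProp G H Cp ∧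
      ∀ e, e ∈ E₀ → ∀ x y, s(x, y) = e → Cp x y = φc e := by
  classical
  set Cp : (α × β) → (α × β) → C := fun p q =>
    if h : ∃ e, valF e p q ≠ bc cG cH ι η p q then valF h.choose p q
    else bc cG cH ι η p q with hCp
  have F1 : ∀ e1 e2 : {e // e ∈ E₀}, e1 ≠ e2 → ∀ p q,
      valF e1 p q ≠ bc cG cH ι η p q → valF e2 p q = bc cG cH ι η p q := by
    intro e1 e2 hne p q h1
    by_contra h2
    obtain ⟨hadj1, ⟨w1, hw1, z1, hz1, hs1⟩, -⟩ := (hvalF e1).2.2.2 p q h1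
    obtain ⟨-, ⟨w2, hw2, z2, hz2, hs2⟩, -⟩ := (hvalF e2).2.2.2 p q h2
    have hd := hdist e1.1 e1.2 e2.1 e2.2 (fun hh => hne (Subtype.ext hh)) z1 hz1 z2 hz2
    have hmid : Step (G □ H) w1 w2 := by
      rcases hw1 with rfl | rfl <;> rcases hw2 with rfl | rfl
      exacts [Or.inl rfl, Or.inr hadj1, Or.inr hadj1.symm, Or.inl rfl]
    exact chain3_absurd hd hs1 hmid hs2.symm
  have F2 : ∀ p q (e : {e // e ∈ E₀}), valF e p q ≠ bc cG cH ι η p q →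
      Cp p q = valF e p q := by
    intro p q e h
    have hx : ∃ e, valF e p q ≠ bc cG cH ι η p q := ⟨e, h⟩
    simp only [hCp]
    rw [dif_pos hx]
    by_cases hc : hx.choose = e
    · rw [hc]
    · exact absurd (F1 hx.choose e hc p q hx.choose_spec) h
  have F3 : ∀ p q, ¬ (∃ e, valF e p q ≠ bc cG cH ι η p q) →
      Cp p q = bc cG cH ι η p q := by
    intro p q h; simp only [hCp]; rw [dif_neg h]
  have hsym : ∀ p q, Cp p q = Cp q p := by
    intro p q
    by_cases hx : ∃ e, valF e p q ≠ bc cG cH ι η p q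
    · obtain ⟨e, h⟩ := hx
      have h' : valF e q p ≠ bc cG cH ι η q p := by
        rw [← (hvalF e).1 p q, ← bc_symm hg p q]; exact h
      rw [F2 p q e h, F2 q p e h', (hvalF e).1 p q]
    · have hx' : ¬ ∃ e, valF e q p ≠ bc cG cH ι η q p := by
        rintro ⟨e, h⟩
        exact hx ⟨e, by rw [(hvalF e).1 p q, bc_symm hg p q]; exact h⟩
      rw [F3 p q hx, F3 q p hx', bc_symm hg]
  have hprop : PProp G H Cp := by
    intro z x y hzx hzy hxy
    by_cases hx : ∃ e, valF e z x ≠ bc cG cH ι η z x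
    · obtain ⟨e1, h1⟩ := hx
      rw [F2 z x e1 h1]
      by_cases hy : ∃ e, valF e z y ≠ bc cG cH ι η z y
      · obtain ⟨e2, h2⟩ := hy
        rw [F2 z y e2 h2]
        by_cases he : e1 = e2
        · subst he
          exact (hvalF e1).2.1 z x y hzx hzy hxy
        · have hne12 : e1.1 ≠ e2.1 := fun hh => he (Subtype.ext hh)
          obtain ⟨-, -, hD1⟩ := (hvalF e1).2.2.2 z x h1
          obtain ⟨-, -, hD2⟩ := (hvalF e2).2.2.2 z y h2
          have hdd : ∀ x1, x1 ∈ e1.1 → ∀ y1, y1 ∈ e2.1 →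
              (4 : ℕ∞) ≤ (G □ H).edist x1 y1 :=
            fun x1 hx1 y1 hy1 => hdist e1.1 e1.2 e2.1 e2.2 hne12 x1 hx1 y1 hy1
          rcases hD1 z (Or.inl rfl) with ⟨z1, hz1, hs1⟩ |
            ⟨x₀, y₀, hm1, hG1, hH1, hc1⟩ | ⟨x₀, y₀, hm1, hG1, hH1, hc1⟩
          · rcases hD2 z (Or.inl rfl) with ⟨z2, hz2, hs2⟩ |
              ⟨x₁, y₁, hm2, hG2, hH2, hc2⟩ | ⟨x₁, y₁, hm2, hG2, hH2, hc2⟩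
            · exact (chain3_absurd (hdd z1 hz1 z2 hz2) hs1 (Or.inl rfl) hs2.symm).elim
            · have s2 : Step (G □ H) z (z.1, y₁) :=
                Or.inr (boxProd_adj.mpr (Or.inr ⟨hH2.symm, rfl⟩))
              have s3 : Step (G □ H) (z.1, y₁) (x₁, y₁) :=
                Or.inr (boxProd_adj.mpr (Or.inl ⟨hG2.symm, rfl⟩))
              exact (chain3_absurd (hdd z1 hz1 (x₁, y₁) hm2) hs1 s2 s3).elim
            · have s2 : Step (G □ H) z (z.1, y₁) :=
                Or.inr (boxProd_adj.mpr (Or.inr ⟨hH2.symm, rfl⟩))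
              have s3 : Step (G □ H) (z.1, y₁) (x₁, y₁) :=
                Or.inr (boxProd_adj.mpr (Or.inl ⟨hG2.symm, rfl⟩))
              exact (chain3_absurd (hdd z1 hz1 (x₁, y₁) hm2) hs1 s2 s3).elim
          · have s1 : Step (G □ H) (x₀, y₀) (z.1, y₀) :=
              Or.inr (boxProd_adj.mpr (Or.inl ⟨hG1, rfl⟩))
            have s2 : Step (G □ H) (z.1, y₀) z :=
              Or.inr (boxProd_adj.mpr (Or.inr ⟨hH1, rfl⟩))
            rcases hD2 z (Or.inl rfl) with ⟨z2, hz2, hs2⟩ |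
              ⟨x₁, y₁, hm2, hG2, hH2, hc2⟩ | ⟨x₁, y₁, hm2, hG2, hH2, hc2⟩
            · exact (chain3_absurd (hdd (x₀, y₀) hm1 z2 hz2) s1 s2 hs2.symm).elim
            · rw [hc1, hc2]
              intro heq
              have hcc : cG x₀ z.1 = cG x₁ z.1 := hg.iinj heq
              by_cases hxx : x₀ = x₁
              · subst hxx
                have t1 : Step (G □ H) (x₀, y₀) (x₀, z.2) :=
                  Or.inr (boxProd_adj.mpr (Or.inr ⟨hH1, rfl⟩))
                have t2 : Step (G □ H) (x₀, z.2) (x₀, y₁) :=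
                  Or.inr (boxProd_adj.mpr (Or.inr ⟨hH2.symm, rfl⟩))
                exact chain3_absurd (hdd (x₀, y₀) hm1 (x₀, y₁) hm2) t1 t2 (Or.inl rfl)
              · apply hg.gprop z.1 x₀ x₁ hG1.symm hG2.symm hxx
                rw [hg.gsym z.1 x₀, hg.gsym z.1 x₁]
                exact hcc
            · rw [hc1, hc2]
              exact hg.disj _ _
          · have s1 : Step (G □ H) (x₀, y₀) (z.1, y₀) :=
              Or.inr (boxProd_adj.mpr (Or.inl ⟨hG1, rfl⟩))
            have s2 : Step (G □ H) (z.1, y₀) z :=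
              Or.inr (boxProd_adj.mpr (Or.inr ⟨hH1, rfl⟩))
            rcases hD2 z (Or.inl rfl) with ⟨z2, hz2, hs2⟩ |
              ⟨x₁, y₁, hm2, hG2, hH2, hc2⟩ | ⟨x₁, y₁, hm2, hG2, hH2, hc2⟩
            · exact (chain3_absurd (hdd (x₀, y₀) hm1 z2 hz2) s1 s2 hs2.symm).elim
            · rw [hc1, hc2]
              exact fun heq => hg.disj _ _ heq.symm
            · rw [hc1, hc2]
              intro heq
              have hcc : cH y₀ z.2 = cH y₁ z.2 := hg.einj heq
              by_cases hyy : y₀ = y₁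
              · subst hyy
                have t1 : Step (G □ H) (x₀, y₀) (z.1, y₀) :=
                  Or.inr (boxProd_adj.mpr (Or.inl ⟨hG1, rfl⟩))
                have t2 : Step (G □ H) (z.1, y₀) (x₁, y₀) :=
                  Or.inr (boxProd_adj.mpr (Or.inl ⟨hG2.symm, rfl⟩))
                exact chain3_absurd (hdd (x₀, y₀) hm1 (x₁, y₀) hm2) t1 t2 (Or.inl rfl)
              · apply hg.hprop z.2 y₀ y₁ hH1.symm hH2.symm hyy
                rw [hg.hsym z.2 y₀, hg.hsym z.2 y₁]
                exact hcc
      · have h2 : valF e1 z y = bc cG cH ι η z y := by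
          by_contra hcon; exact hy ⟨e1, hcon⟩
        rw [F3 z y hy, ← h2]
        exact (hvalF e1).2.1 z x y hzx hzy hxy
    · rw [F3 z x hx]
      by_cases hy : ∃ e, valF e z y ≠ bc cG cH ι η z y
      · obtain ⟨e2, h2⟩ := hy
        have h1' : valF e2 z x = bc cG cH ι η z x := by
          by_contra hcon; exact hx ⟨e2, hcon⟩
        rw [F2 z y e2 h2, ← h1']
        exact (hvalF e2).2.1 z x y hzx hzy hxy
      · rw [F3 z y hy]
        exact bc_proper hg z x y hzx hzy hxy
  refine ⟨Cp, hsym, hprop, ?_⟩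
  intro e he x y hxy
  have hval : valF ⟨e, he⟩ x y = φc e := (hvalF ⟨e, he⟩).2.2.1 x y hxy
  by_cases hx : ∃ f, valF f x y ≠ bc cG cH ι η x y
  · obtain ⟨f, hf⟩ := hx
    by_cases hfe : f = ⟨e, he⟩
    · rw [F2 x y f hf, hfe, hval]
    · exfalso
      obtain ⟨hadj, ⟨w, hw, z0, hz0, hs⟩, -⟩ := (hvalF f).2.2.2 x y hf
      have hwe : w ∈ e := by
        rcases hw with rfl | rfl
        · rw [← hxy]; exact Sym2.mem_mk_left _ _
        · rw [← hxy]; exact Sym2.mem_mk_right _ _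
      have hd := hdist e he f.1 f.2 (fun hh => hfe (Subtype.ext hh.symm)) w hwe z0 hz0
      exact chain3_absurd hd (Or.inl rfl) (Or.inl rfl) hs.symm
  · have h0 : valF ⟨e, he⟩ x y = bc cG cH ι η x y := by
      by_contra hcon; exact hx ⟨⟨e, he⟩, hcon⟩
    rw [F3 x y hx, ← h0, hval]

end Combine


end Ext11

open Ext11 in
/-- extract a proper edge coloring with `maxDegree` colors from a Class 1 graph -/
lemma exists_proper_coloring {V : Type*} [Fintype V] (K : SimpleGraph V)
    (hK : IsClassOne K) : ∃ c : Sym2 V → Fin K.maxDegree, IsProperEdgeColoring K c := by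
  classical
  have hne : {n | ∃ c : Sym2 V → Fin n, IsProperEdgeColoring K c}.Nonempty := by
    refine ⟨Fintype.card (Sym2 V), fun e => Fintype.equivFin (Sym2 V) e, ?_⟩
    intro e _ f _ hnef _
    exact fun hh => hnef ((Fintype.equivFin (Sym2 V)).injective hh)
  have hmem := Nat.sInf_mem hne
  have hK' : sInf {n | ∃ c : Sym2 V → Fin n, IsProperEdgeColoring K c} = K.maxDegree := hK
  rw [hK'] at hmem
  exact hmem

lemma maxDegree_pos {V : Type*} [Fintype V] (K : SimpleGraph V)
    (hKe : K.edgeSet.Nonempty) : 0 < K.maxDegree := by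
  classical
  obtain ⟨e, he⟩ := hKe
  obtain ⟨x, y, rfl⟩ : ∃ x y, e = s(x, y) :=
    Sym2.ind (f := fun s => ∃ x y, s = s(x, y)) (fun x y => ⟨x, y, rfl⟩) e
  have hadj : K.Adj x y := (SimpleGraph.mem_edgeSet _).mp he
  calc 0 < K.degree x := (K.degree_pos_iff_exists_adj x).mpr ⟨y, hadj⟩
  _ ≤ K.maxDegree := K.degree_le_maxDegree x

/-- A distance-4 precoloring of the Cartesian product of two Class 1
graphs with at most `Δ(G) + Δ(H)` colors is extendable. -/
theorem extend_distance4_boxProd {α β : Type*} [Fintype α] [Fintype β]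
    (G : SimpleGraph α) (H : SimpleGraph β)
    (hG : IsClassOne G) (hH : IsClassOne H)
    (hGe : G.edgeSet.Nonempty) (hHe : H.edgeSet.Nonempty)
    (E₀ : Set (Sym2 (α × β)))
    (φ : Sym2 (α × β) → Fin (G.maxDegree + H.maxDegree))
    (hφ : IsProperEdgeColoringOn (G □ H) E₀ φ)
    (hdist : ∀ e ∈ E₀, ∀ f ∈ E₀, e ≠ f → EdgeDistGE (G □ H) e f 4) :
    ∃ c : Sym2 (α × β) → Fin (G.maxDegree + H.maxDegree),
      IsProperEdgeColoring (G □ H) c ∧ ∀ e ∈ E₀, c e = φ e := by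
  classical
  obtain ⟨cG', hcG'⟩ := exists_proper_coloring G hG
  obtain ⟨cH', hcH'⟩ := exists_proper_coloring H hH
  set cGp : α → α → Fin G.maxDegree := fun x y => cG' s(x, y) with hcGp
  set cHp : β → β → Fin H.maxDegree := fun x y => cH' s(x, y) with hcHp
  set ι : Fin G.maxDegree → Fin (G.maxDegree + H.maxDegree) :=
    Fin.castAdd H.maxDegree with hι
  set η : Fin H.maxDegree → Fin (G.maxDegree + H.maxDegree) :=
    Fin.natAdd G.maxDegree with hη
  have good : Ext11.Good G H cGp cHp ι η := by
    refine ⟨Fin.castAdd_injective _ _, ?_, ?_, ?_, ?_, ?_, ?_⟩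
    · intro x y h
      refine Fin.ext ?_
      have h2 : G.maxDegree + x.val = G.maxDegree + y.val := congrArg Fin.val h
      omega
    · intro x y h
      have h2 : (x : ℕ) = G.maxDegree + y := congrArg Fin.val h
      have := x.2
      omega
    · intro x y
      simp only [hcGp]
      rw [Sym2.eq_swap]
    · intro v x y hx hy hne
      refine hcG' s(v, x) ((SimpleGraph.mem_edgeSet _).mpr hx) s(v, y)
        ((SimpleGraph.mem_edgeSet _).mpr hy) ?_ ⟨v, Sym2.mem_mk_left _ _, Sym2.mem_mk_left _ _⟩
      intro hh
      rcases Sym2.eq_iff.mp hh with ⟨-, h⟩ | ⟨h1, -⟩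
      · exact hne h
      · exact hy.ne' h1.symm
    · intro x y
      simp only [hcHp]
      rw [Sym2.eq_swap]
    · intro v x y hx hy hne
      refine hcH' s(v, x) ((SimpleGraph.mem_edgeSet _).mpr hx) s(v, y)
        ((SimpleGraph.mem_edgeSet _).mpr hy) ?_ ⟨v, Sym2.mem_mk_left _ _, Sym2.mem_mk_left _ _⟩
      intro hh
      rcases Sym2.eq_iff.mp hh with ⟨-, h⟩ | ⟨h1, -⟩
      · exact hne h
      · exact hy.ne' h1.symm
  have goodm : Ext11.Good H G cHp cGp η ι :=
    ⟨good.einj, good.iinj, fun x y h => good.disj y x h.symm, good.hsym, good.hprop,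
      good.gsym, good.gprop⟩
  have hFG : Nonempty (Fin G.maxDegree) := ⟨⟨0, maxDegree_pos G hGe⟩⟩
  have hFH : Nonempty (Fin H.maxDegree) := ⟨⟨0, maxDegree_pos H hHe⟩⟩
  have hsplit : ∀ t : Fin (G.maxDegree + H.maxDegree),
      (∃ x, t = ι x) ∨ (∃ y, t = η y) := by
    intro t
    refine Fin.addCases (motive := fun t => (∃ x, t = ι x) ∨ (∃ y, t = η y)) ?_ ?_ t
    · exact fun i => Or.inl ⟨i, rfl⟩
    · exact fun i => Or.inr ⟨i, rfl⟩
  have hrep : ∀ s : Sym2 (α × β), ∃ x y, s = s(x, y) :=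
    fun s => Sym2.ind (f := fun s => ∃ x y, s = s(x, y)) (fun x y => ⟨x, y, rfl⟩) s
  have main : ∀ e : {e // e ∈ E₀},
      ∃ val, Ext11.OutE G H cGp cHp ι η (φ e.1) e.1 val := by
    rintro ⟨e, he⟩
    obtain ⟨⟨a, b⟩, ⟨a', b'⟩, rfl⟩ :
        ∃ x y : α × β, e = s(x, y) := hrep e
    have hadj : (G □ H).Adj (a, b) (a', b') := (SimpleGraph.mem_edgeSet _).mp (hφ.1 he)
    rcases SimpleGraph.boxProd_adj.mp hadj with ⟨hg', he2⟩ | ⟨hh', he1⟩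
    · obtain rfl : b = b' := he2
      obtain ⟨val, hOut⟩ :=
        Ext11.coreG good hFH hg' (φ s((a, b), (a', b))) (hsplit _)
      exact ⟨val, Ext11.OutE_of_Out good hOut⟩
    · obtain rfl : a = a' := he1
      obtain ⟨valm, hOutm⟩ :=
        Ext11.coreG goodm hFG hh' (φ s((a, b), (a, b'))) (Or.symm (hsplit _))
      exact Ext11.OutE_of_Out_swap good hh' hOutm
  choose valF hvalF using main
  obtain ⟨Cp, hCps, hCpp, hCpe⟩ := Ext11.combine good E₀ φ
    (fun e he f hf hnef x hx y hy => by
      have := hdist e he f hf hnef x hx y hy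
      exact_mod_cast this)
    valF hvalF
  refine ⟨Sym2.lift ⟨Cp, hCps⟩, ?_, ?_⟩
  · intro e he f hf hnef hsh
    obtain ⟨x1, y1, rfl⟩ := hrep e
    obtain ⟨x2, y2, rfl⟩ := hrep f
    obtain ⟨v, hv1, hv2⟩ := hsh
    simp only [Sym2.lift_mk]
    have hadj1 : (G □ H).Adj x1 y1 := (SimpleGraph.mem_edgeSet _).mp he
    have hadj2 : (G □ H).Adj x2 y2 := (SimpleGraph.mem_edgeSet _).mp hf
    rw [Sym2.mem_iff] at hv1 hv2
    rcases hv1 with rfl | rfl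
    · rcases hv2 with rfl | rfl
      · exact hCpp v y1 y2 hadj1 hadj2 (fun hh => hnef (by rw [hh]))
      · rw [hCps x2 v]
        refine hCpp v y1 x2 hadj1 hadj2.symm ?_
        intro hh
        refine hnef ?_
        rw [hh]
        exact Sym2.eq_swap
    · rcases hv2 with rfl | rfl
      · rw [hCps x1 v]
        refine hCpp v x1 y2 hadj1.symm hadj2 ?_
        intro hh
        refine hnef ?_
        rw [hh]
        exact Sym2.eq_swap
      · rw [hCps x1 v, hCps x2 v]
        refine hCpp v x1 x2 hadj1.symm hadj2.symm ?_
        intro hh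
        exact hnef (by rw [hh])
  · intro e he
    obtain ⟨x, y, rfl⟩ := hrep e
    simp only [Sym2.lift_mk]
    exact hCpe _ he x y rfl
end

section
/- Let G and H be Class 1 simple graphs, each with at least one edge. Then the Cartesian product G □ H is Class 1; more precisely, Δ(G □ H) = Δ(G) + Δ(H) and G □ H admits a proper edge coloring with Δ(G) + Δ(H) colors, so χ'(G □ H) = Δ(G) + Δ(H). -/
open SimpleGraph
open scoped Classical

lemma colorings_nonempty {V : Type*} [Fintype V] (G : SimpleGraph V) :
    {n | ∃ c : Sym2 V → Fin n, IsProperEdgeColoring G c}.Nonempty :=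
  ⟨Fintype.card (Sym2 V), Fintype.equivFin (Sym2 V), fun _ _ _ _ hef _ h =>
    hef ((Fintype.equivFin (Sym2 V)).injective h)⟩

lemma exists_coloring_chromIndex {V : Type*} [Fintype V] (G : SimpleGraph V) :
    ∃ c : Sym2 V → Fin (chromIndex G), IsProperEdgeColoring G c :=
  Nat.sInf_mem (colorings_nonempty G)

lemma maxDegree_le_of_coloring {V : Type*} [Fintype V] (G : SimpleGraph V) {n : ℕ}
    (c : Sym2 V → Fin n) (hc : IsProperEdgeColoring G c) : G.maxDegree ≤ n := by
  apply G.maxDegree_le_of_forall_degree_le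
  intro v
  have hinj : Set.InjOn (fun w => c s(v, w)) (G.neighborFinset v) := by
    intro w hw w' hw' h
    simp only [Finset.coe_sort_coe, SimpleGraph.mem_neighborFinset, Finset.mem_coe] at hw hw'
    by_contra hne
    have hne2 : s(v, w) ≠ s(v, w') := by
      rw [Ne, Sym2.eq_iff]
      rintro (⟨-, h⟩ | ⟨h, -⟩)
      · exact hne h
      · exact hw'.ne h
    exact hc _ (G.mem_edgeSet.mpr hw) _ (G.mem_edgeSet.mpr hw') hne2 ⟨v, by simp, by simp⟩ h
  calc G.degree v = (G.neighborFinset v).card := rfl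
    _ ≤ (Finset.univ : Finset (Fin n)).card :=
        Finset.card_le_card_of_injOn _ (fun _ _ => Finset.mem_univ _) hinj
    _ = n := by simp

lemma maxDegree_le_chromIndex {V : Type*} [Fintype V] (G : SimpleGraph V) :
    G.maxDegree ≤ chromIndex G := by
  obtain ⟨c, hc⟩ := exists_coloring_chromIndex G
  exact maxDegree_le_of_coloring G c hc

/-- The Cartesian product of two Class 1 graphs, each with at least one
edge, is Class 1: `Δ(G □ H) = Δ(G) + Δ(H)`, the product admits a proper edge coloring with
`Δ(G) + Δ(H)` colors, and so `χ'(G □ H) = Δ(G) + Δ(H)`. -/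
theorem boxProd_classOne {α β : Type*} [Fintype α] [Fintype β]
    (G : SimpleGraph α) (H : SimpleGraph β)
    (hG : IsClassOne G) (hH : IsClassOne H)
    (hGe : G.edgeSet.Nonempty) (hHe : H.edgeSet.Nonempty) :
    (G □ H).maxDegree = G.maxDegree + H.maxDegree ∧
    (∃ c : Sym2 (α × β) → Fin (G.maxDegree + H.maxDegree),
      IsProperEdgeColoring (G □ H) c) ∧
    chromIndex (G □ H) = G.maxDegree + H.maxDegree := by
  classical
  have hα : Nonempty α := ⟨hGe.choose.out.1⟩
  have hβ : Nonempty β := ⟨hHe.choose.out.1⟩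
  obtain ⟨a0, ha0⟩ := G.exists_maximal_degree_vertex
  obtain ⟨b0, hb0⟩ := H.exists_maximal_degree_vertex
  have hmax : (G □ H).maxDegree = G.maxDegree + H.maxDegree := by
    refine le_antisymm ((G □ H).maxDegree_le_of_forall_degree_le _ fun x => ?_) ?_
    · rw [SimpleGraph.degree_boxProd]
      exact Nat.add_le_add (G.degree_le_maxDegree _) (H.degree_le_maxDegree _)
    · rw [ha0, hb0]
      have h1 := (G □ H).degree_le_maxDegree (a0, b0)
      rw [SimpleGraph.degree_boxProd] at h1
      exact h1
  have hG' : ∃ c : Sym2 α → Fin G.maxDegree, IsProperEdgeColoring G c := by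
    have h := exists_coloring_chromIndex G
    rwa [hG] at h
  have hH' : ∃ c : Sym2 β → Fin H.maxDegree, IsProperEdgeColoring H c := by
    have h := exists_coloring_chromIndex H
    rwa [hH] at h
  obtain ⟨cG, hcG⟩ := hG'
  obtain ⟨cH, hcH⟩ := hH'
  let c : Sym2 (α × β) → Fin (G.maxDegree + H.maxDegree) := fun e =>
    if (e.map Prod.fst).IsDiag then Fin.natAdd G.maxDegree (cH (e.map Prod.snd))
    else Fin.castAdd H.maxDegree (cG (e.map Prod.fst))
  have hcore : IsProperEdgeColoring (G □ H) c := by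
    intro e
    induction e using Sym2.ind with
    | _ p q =>
    intro he f
    induction f using Sym2.ind with
    | _ r s =>
    intro hf hef hshare
    obtain ⟨v, hv1, hv2⟩ := hshare
    obtain ⟨p1, p2⟩ := p; obtain ⟨q1, q2⟩ := q
    obtain ⟨r1, r2⟩ := r; obtain ⟨s1, s2⟩ := s
    simp only [SimpleGraph.mem_edgeSet, SimpleGraph.boxProd_adj] at he hf
    rw [Sym2.mem_iff] at hv1 hv2
    rcases he with ⟨heG, he2⟩ | ⟨heH, he1⟩ <;> rcases hf with ⟨hfG, hf2⟩ | ⟨hfH, hf1⟩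
    · -- both G-type
      have hce : c s((p1, p2), (q1, q2)) = Fin.castAdd H.maxDegree (cG s(p1, q1)) := by
        simp only [c, Sym2.map_pair_eq, Sym2.mk_isDiag_iff, if_neg heG.ne]
      have hcf : c s((r1, r2), (s1, s2)) = Fin.castAdd H.maxDegree (cG s(r1, s1)) := by
        simp only [c, Sym2.map_pair_eq, Sym2.mk_isDiag_iff, if_neg hfG.ne]
      rw [hce, hcf]
      subst he2; subst hf2
      have h2 : p2 = r2 := by
        rcases hv1 with rfl | rfl <;> rcases hv2 with h | h <;>
          simpa using congrArg Prod.snd h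
      subst h2
      have hGne : s(p1, q1) ≠ s(r1, s1) := by
        intro h
        apply hef
        rcases Sym2.eq_iff.mp h with ⟨rfl, rfl⟩ | ⟨rfl, rfl⟩
        · rfl
        · exact Sym2.eq_swap
      intro h
      refine hcG _ (G.mem_edgeSet.mpr heG) _ (G.mem_edgeSet.mpr hfG) hGne
        ⟨v.1, ?_, ?_⟩ (Fin.castAdd_injective _ _ h)
      · rw [Sym2.mem_iff]
        rcases hv1 with rfl | rfl
        · exact Or.inl rfl
        · exact Or.inr rfl
      · rw [Sym2.mem_iff]
        rcases hv2 with rfl | rfl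
        · exact Or.inl rfl
        · exact Or.inr rfl
    · -- e G-type, f H-type
      have hce : c s((p1, p2), (q1, q2)) = Fin.castAdd H.maxDegree (cG s(p1, q1)) := by
        simp only [c, Sym2.map_pair_eq, Sym2.mk_isDiag_iff, if_neg heG.ne]
      have hcf : c s((r1, r2), (s1, s2)) = Fin.natAdd G.maxDegree (cH s(r2, s2)) := by
        simp only [c, Sym2.map_pair_eq, Sym2.mk_isDiag_iff, if_pos hf1]
      rw [hce, hcf]
      intro h
      have h' := congrArg Fin.val h
      simp only [Fin.coe_castAdd, Fin.coe_natAdd] at h'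
      have := (cG s(p1, q1)).isLt
      omega
    · -- e H-type, f G-type
      have hce : c s((p1, p2), (q1, q2)) = Fin.natAdd G.maxDegree (cH s(p2, q2)) := by
        simp only [c, Sym2.map_pair_eq, Sym2.mk_isDiag_iff, if_pos he1]
      have hcf : c s((r1, r2), (s1, s2)) = Fin.castAdd H.maxDegree (cG s(r1, s1)) := by
        simp only [c, Sym2.map_pair_eq, Sym2.mk_isDiag_iff, if_neg hfG.ne]
      rw [hce, hcf]
      intro h
      have h' := congrArg Fin.val h
      simp only [Fin.coe_castAdd, Fin.coe_natAdd] at h'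
      have := (cG s(r1, s1)).isLt
      omega
    · -- both H-type
      have hce : c s((p1, p2), (q1, q2)) = Fin.natAdd G.maxDegree (cH s(p2, q2)) := by
        simp only [c, Sym2.map_pair_eq, Sym2.mk_isDiag_iff, if_pos he1]
      have hcf : c s((r1, r2), (s1, s2)) = Fin.natAdd G.maxDegree (cH s(r2, s2)) := by
        simp only [c, Sym2.map_pair_eq, Sym2.mk_isDiag_iff, if_pos hf1]
      rw [hce, hcf]
      subst he1; subst hf1
      have h1 : p1 = r1 := by
        rcases hv1 with rfl | rfl <;> rcases hv2 with h | h <;>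
          simpa using congrArg Prod.fst h
      subst h1
      have hHne : s(p2, q2) ≠ s(r2, s2) := by
        intro h
        apply hef
        rcases Sym2.eq_iff.mp h with ⟨rfl, rfl⟩ | ⟨rfl, rfl⟩
        · rfl
        · exact Sym2.eq_swap
      intro h
      have h' : cH s(p2, q2) = cH s(r2, s2) := by
        have h'' := congrArg Fin.val h
        simp only [Fin.coe_natAdd] at h''
        exact Fin.ext (by omega)
      refine hcH _ (H.mem_edgeSet.mpr heH) _ (H.mem_edgeSet.mpr hfH) hHne
        ⟨v.2, ?_, ?_⟩ h'
      · rw [Sym2.mem_iff]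
        rcases hv1 with rfl | rfl
        · exact Or.inl rfl
        · exact Or.inr rfl
      · rw [Sym2.mem_iff]
        rcases hv2 with rfl | rfl
        · exact Or.inl rfl
        · exact Or.inr rfl
  refine ⟨hmax, ⟨c, hcore⟩, le_antisymm (Nat.sInf_le ⟨c, hcore⟩) ?_⟩
  rw [← hmax]
  exact maxDegree_le_chromIndex (G □ H)
end

section
/- Let H be a Class 1 simple graph with at least one edge and maximum degree Δ(H). Then there exists a Δ(H)-regular simple graph H* with χ'(H*) = Δ(H) that contains H as a subgraph (i.e., there is an injective graph homomorphism from H into H*), and moreover every vertex of H* outside the image of H has at most one neighbor in the image of H. -/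
open SimpleGraph
open scoped Classical

section Reg

variable {β : Type*} {Δ : ℕ}

/-- `i` is a missing color at `v`. -/
def Miss (H : SimpleGraph β) (c : Sym2 β → Fin Δ) (v : β) (i : Fin Δ) : Prop :=
  ∀ u, H.Adj v u → c s(v, u) ≠ i

/-- The regularized graph on `β × (Fin Δ → Bool)`. -/
def RegGraph (H : SimpleGraph β) (c : Sym2 β → Fin Δ) :
    SimpleGraph (β × (Fin Δ → Bool)) where
  Adj p q := (H.Adj p.1 q.1 ∧ p.2 = q.2) ∨
    (p.1 = q.1 ∧ ∃ i : Fin Δ, Miss H c p.1 i ∧ p.2 i ≠ q.2 i ∧ ∀ j, j ≠ i → p.2 j = q.2 j)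
  symm := by
    constructor
    rintro p q (⟨ha, hs⟩ | ⟨h1, i, hm, hi, hj⟩)
    · exact Or.inl ⟨ha.symm, hs.symm⟩
    · exact Or.inr ⟨h1.symm, i, h1 ▸ hm, hi.symm, fun j hj' => (hj j hj').symm⟩
  loopless := by
    constructor
    rintro p (⟨ha, _⟩ | ⟨_, i, _, hi, _⟩)
    · exact H.loopless.irrefl _ ha
    · exact hi rfl

noncomputable def regColor (c : Sym2 β → Fin Δ) (hΔ : 0 < Δ) :
    Sym2 (β × (Fin Δ → Bool)) → Fin Δ :=
  Sym2.lift ⟨fun p q =>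
    if p.2 = q.2 then c s(p.1, q.1)
    else if h : (Finset.univ.filter fun i => p.2 i ≠ q.2 i).Nonempty then
      (Finset.univ.filter fun i => p.2 i ≠ q.2 i).min' h
    else ⟨0, hΔ⟩, by
    intro p q
    dsimp only
    by_cases h : p.2 = q.2
    · rw [if_pos h, if_pos h.symm, Sym2.eq_swap]
    · rw [if_neg h, if_neg (Ne.symm h)]
      have he : (Finset.univ.filter fun i => p.2 i ≠ q.2 i)
          = (Finset.univ.filter fun i => q.2 i ≠ p.2 i) := by
        ext j; simp [ne_comm]
      rw [he]⟩

lemma regColor_horiz (c : Sym2 β → Fin Δ) (hΔ : 0 < Δ) (p q : β × (Fin Δ → Bool))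
    (h : p.2 = q.2) : regColor c hΔ s(p, q) = c s(p.1, q.1) := by
  simp [regColor, h]

lemma regColor_vert (c : Sym2 β → Fin Δ) (hΔ : 0 < Δ) (p q : β × (Fin Δ → Bool))
    (i : Fin Δ) (hi : p.2 i ≠ q.2 i) (hj : ∀ j, j ≠ i → p.2 j = q.2 j) :
    regColor c hΔ s(p, q) = i := by
  have h : p.2 ≠ q.2 := fun h => hi (congrFun h i)
  have hD : (Finset.univ.filter fun j => p.2 j ≠ q.2 j) = {i} := by
    ext j
    simp only [Finset.mem_filter, Finset.mem_univ, true_and, Finset.mem_singleton]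
    constructor
    · intro hne
      by_contra hji
      exact hne (hj j hji)
    · rintro rfl; exact hi
  simp only [regColor, Sym2.lift_mk, if_neg h, hD]
  rw [dif_pos ⟨i, by simp⟩]
  have : ({i} : Finset (Fin Δ)).min' ⟨i, by simp⟩ = i := Finset.min'_singleton i
  exact this

end Reg

section More

variable {β : Type*} {Δ : ℕ}

lemma regColor_key {H : SimpleGraph β} {c : Sym2 β → Fin Δ}
    (hc : IsProperEdgeColoring H c) (hΔ : 0 < Δ) {p q q' : β × (Fin Δ → Bool)}
    (hq : (RegGraph H c).Adj p q) (hq' : (RegGraph H c).Adj p q') (hne : q ≠ q') :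
    regColor c hΔ s(p, q) ≠ regColor c hΔ s(p, q') := by
  rcases hq with ⟨ha, hs⟩ | ⟨h1, i, hm, hi, hj⟩ <;>
    rcases hq' with ⟨ha', hs'⟩ | ⟨h1', i', hm', hi', hj'⟩
  · -- both horizontal
    rw [regColor_horiz c hΔ p q hs, regColor_horiz c hΔ p q' hs']
    have hne1 : q.1 ≠ q'.1 := by
      intro h; exact hne (Prod.ext h (hs.symm.trans hs'))
    have hedne : s(p.1, q.1) ≠ s(p.1, q'.1) := by
      intro h
      rcases Sym2.eq_iff.mp h with ⟨_, h2⟩ | ⟨h2, h3⟩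
      · exact hne1 h2
      · exact H.loopless.irrefl _ (h2 ▸ ha')
    exact hc _ (H.mem_edgeSet.mpr ha) _ (H.mem_edgeSet.mpr ha') hedne
      ⟨p.1, Sym2.mem_mk_left _ _, Sym2.mem_mk_left _ _⟩
  · -- horizontal vs vertical
    rw [regColor_horiz c hΔ p q hs, regColor_vert c hΔ p q' i' hi' hj']
    exact hm' q.1 ha
  · -- vertical vs horizontal
    rw [regColor_vert c hΔ p q i hi hj, regColor_horiz c hΔ p q' hs']
    exact fun h => hm q'.1 ha' h.symm
  · -- both vertical
    rw [regColor_vert c hΔ p q i hi hj, regColor_vert c hΔ p q' i' hi' hj']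
    intro h; subst h
    apply hne
    have h2 : q.2 = q'.2 := by
      funext j
      by_cases hji : j = i
      · subst hji
        revert hi hi'
        cases p.2 j <;> cases q.2 j <;> cases q'.2 j <;> simp
      · exact (hj j hji).symm.trans (hj' j hji)
    exact Prod.ext (h1.symm.trans h1') h2

lemma regColor_proper {H : SimpleGraph β} {c : Sym2 β → Fin Δ}
    (hc : IsProperEdgeColoring H c) (hΔ : 0 < Δ) :
    IsProperEdgeColoring (RegGraph H c) (regColor c hΔ) := by
  intro e he f hf hne hshare
  obtain ⟨x, hxe, hxf⟩ := hshare
  obtain ⟨q, rfl⟩ := Sym2.mem_iff_exists.mp hxe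
  obtain ⟨q', rfl⟩ := Sym2.mem_iff_exists.mp hxf
  exact regColor_key hc hΔ ((SimpleGraph.mem_edgeSet _).mp he) ((SimpleGraph.mem_edgeSet _).mp hf)
    (fun h => hne (by rw [h]))

lemma degree_le_of_proper {V : Type*} [Fintype V] (G : SimpleGraph V) {n : ℕ}
    (C : Sym2 V → Fin n) (hC : IsProperEdgeColoring G C) (w : V) : G.degree w ≤ n := by
  classical
  have : (G.neighborFinset w).card ≤ (Finset.univ : Finset (Fin n)).card := by
    apply Finset.card_le_card_of_injOn (fun u => C s(w, u)) (fun _ _ => Finset.mem_univ _)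
    intro u hu u' hu' hcc
    by_contra hne
    have hadj : G.Adj w u := (SimpleGraph.mem_neighborFinset ..).mp hu
    have hadj' : G.Adj w u' := (SimpleGraph.mem_neighborFinset ..).mp hu'
    have hedne : s(w, u) ≠ s(w, u') := by
      intro h
      rcases Sym2.eq_iff.mp h with ⟨_, h2⟩ | ⟨h2, h3⟩
      · exact hne h2
      · exact G.loopless.irrefl _ (h2 ▸ hadj')
    exact hC _ (G.mem_edgeSet.mpr hadj) _ (G.mem_edgeSet.mpr hadj') hedne
      ⟨w, Sym2.mem_mk_left _ _, Sym2.mem_mk_left _ _⟩ hcc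
  simpa using this

lemma chromIndex_eq_of {V : Type*} [Fintype V] [Nonempty V] {Δ : ℕ} (G : SimpleGraph V)
    (hreg : G.IsRegularOfDegree Δ)
    (ex : ∃ C : Sym2 V → Fin Δ, IsProperEdgeColoring G C) : chromIndex G = Δ := by
  refine le_antisymm (Nat.sInf_le ex) (le_csInf ⟨Δ, ex⟩ ?_)
  rintro n ⟨C, hC⟩
  obtain ⟨w⟩ := ‹Nonempty V›
  have := degree_le_of_proper G C hC w
  rwa [hreg w] at this

end More

section Degree

variable {β : Type*} [Fintype β] {Δ : ℕ}

noncomputable def flipAt (s : Fin Δ → Bool) (i : Fin Δ) : Fin Δ → Bool :=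
  Function.update s i (!s i)

lemma flipAt_self (s : Fin Δ → Bool) (i : Fin Δ) : flipAt s i i = !s i := by
  simp [flipAt]

lemma flipAt_other (s : Fin Δ → Bool) {i j : Fin Δ} (h : j ≠ i) : flipAt s i j = s j := by
  simp [flipAt, Function.update_of_ne h]

lemma color_inj {H : SimpleGraph β} {c : Sym2 β → Fin Δ}
    (hc : IsProperEdgeColoring H c) {v u u' : β} (h : H.Adj v u) (h' : H.Adj v u')
    (hne : u ≠ u') : c s(v, u) ≠ c s(v, u') := by
  have hedne : s(v, u) ≠ s(v, u') := by
    intro he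
    rcases Sym2.eq_iff.mp he with ⟨_, h2⟩ | ⟨h2, h3⟩
    · exact hne h2
    · exact H.loopless.irrefl _ (h2 ▸ h')
  exact hc _ ((SimpleGraph.mem_edgeSet _).mpr h) _ ((SimpleGraph.mem_edgeSet _).mpr h') hedne
    ⟨v, Sym2.mem_mk_left _ _, Sym2.mem_mk_left _ _⟩

lemma card_not_miss {H : SimpleGraph β} {c : Sym2 β → Fin Δ}
    (hc : IsProperEdgeColoring H c) (v : β) :
    (Finset.univ.filter fun i => ¬ Miss H c v i).card = H.degree v := by
  have himg : (H.neighborFinset v).image (fun u => c s(v, u))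
      = Finset.univ.filter fun i => ¬ Miss H c v i := by
    ext i
    simp [Miss, SimpleGraph.mem_neighborFinset, not_forall]
  rw [← himg, Finset.card_image_of_injOn, SimpleGraph.card_neighborFinset_eq_degree]
  intro u hu u' hu' hcc
  by_contra hne
  exact color_inj hc ((SimpleGraph.mem_neighborFinset _ _ _).mp hu)
    ((SimpleGraph.mem_neighborFinset _ _ _).mp hu') hne hcc

lemma regGraph_degree {H : SimpleGraph β} {c : Sym2 β → Fin Δ}
    (hc : IsProperEdgeColoring H c) (hdeg : ∀ v, H.degree v ≤ Δ)
    (v : β) (s : Fin Δ → Bool) : (RegGraph H c).degree (v, s) = Δ := by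
  have hnb : (RegGraph H c).neighborFinset (v, s) =
      (H.neighborFinset v).image (fun u => (u, s)) ∪
      (Finset.univ.filter fun i => Miss H c v i).image (fun i => (v, flipAt s i)) := by
    ext q
    simp only [SimpleGraph.mem_neighborFinset, Finset.mem_union, Finset.mem_image,
      Finset.mem_filter, Finset.mem_univ, true_and]
    constructor
    · rintro (⟨ha, hs⟩ | ⟨h1, i, hm, hi, hj⟩)
      · exact Or.inl ⟨q.1, ha, Prod.ext rfl hs⟩
      · refine Or.inr ⟨i, hm, ?_⟩
        refine Prod.ext h1 ?_
        show flipAt s i = q.2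
        funext j
        by_cases hji : j = i
        · subst hji
          rw [flipAt_self]
          have hi' : s j ≠ q.2 j := hi
          revert hi'
          cases s j <;> cases q.2 j <;> simp
        · rw [flipAt_other s hji]
          exact hj j hji
    · rintro (⟨u, ha, rfl⟩ | ⟨i, hm, rfl⟩)
      · exact Or.inl ⟨ha, rfl⟩
      · refine Or.inr ⟨rfl, i, hm, ?_, fun j hj => (flipAt_other s hj).symm⟩
        show s i ≠ flipAt s i i
        rw [flipAt_self]
        cases s i <;> simp
  have hdisj : Disjoint ((H.neighborFinset v).image (fun u => (u, s)))
      (((Finset.univ.filter fun i => Miss H c v i)).image (fun i => (v, flipAt s i))) := by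
    rw [Finset.disjoint_left]
    rintro q hq hq'
    obtain ⟨u, _, rfl⟩ := Finset.mem_image.mp hq
    obtain ⟨i, _, hqi⟩ := Finset.mem_image.mp hq'
    have : flipAt s i = s := (congrArg Prod.snd hqi)
    have := congrFun this i
    rw [flipAt_self] at this
    revert this; cases s i <;> simp
  have hc1 : ((H.neighborFinset v).image (fun u => (u, s))).card = H.degree v := by
    rw [Finset.card_image_of_injective _ (fun a b hab => congrArg Prod.fst hab),
      SimpleGraph.card_neighborFinset_eq_degree]
  have hinj : Function.Injective (fun i => ((v, flipAt s i) : β × (Fin Δ → Bool))) := by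
    intro i i' hii
    by_contra hne
    have h2 : flipAt s i = flipAt s i' := congrArg Prod.snd hii
    have := congrFun h2 i
    rw [flipAt_self, flipAt_other s hne] at this
    revert this; cases s i <;> simp
  have hc2 : (((Finset.univ.filter fun i => Miss H c v i)).image
      (fun i => (v, flipAt s i))).card = Δ - H.degree v := by
    rw [Finset.card_image_of_injective _ hinj]
    have hsum := Finset.card_filter_add_card_filter_not
      (s := (Finset.univ : Finset (Fin Δ))) (p := fun i => Miss H c v i)
    rw [card_not_miss hc v] at hsum
    simp only [Finset.card_univ, Fintype.card_fin] at hsum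
    omega
  rw [SimpleGraph.degree, hnb, Finset.card_union_of_disjoint hdisj, hc1, hc2]
  have := hdeg v
  omega

end Degree

section Transport

variable {V V' : Type*}

lemma comap_degree [Fintype V] [Fintype V'] (G : SimpleGraph V) (φ : V' ≃ V) (x : V') :
    (G.comap (φ : V' → V)).degree x = G.degree (φ x) := by
  have h : (G.comap (φ : V' → V)).neighborFinset x
      = (G.neighborFinset (φ x)).map φ.symm.toEmbedding := by
    ext y
    simp [SimpleGraph.mem_neighborFinset, Finset.mem_map_equiv]
  rw [SimpleGraph.degree, h, Finset.card_map, SimpleGraph.degree]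

lemma edge_mem_comap (G : SimpleGraph V) (φ : V' ≃ V) (e : Sym2 V')
    (he : e ∈ (G.comap (φ : V' → V)).edgeSet) : Sym2.map φ e ∈ G.edgeSet := by
  induction e using Sym2.ind with
  | _ a b => simpa using he

lemma proper_comap (G : SimpleGraph V) (φ : V' ≃ V) {n : ℕ} (C : Sym2 V → Fin n)
    (hC : IsProperEdgeColoring G C) :
    IsProperEdgeColoring (G.comap (φ : V' → V)) (fun e => C (Sym2.map φ e)) := by
  intro e he f hf hne hsh
  obtain ⟨x, hx1, hx2⟩ := hsh
  refine hC _ (edge_mem_comap G φ e he) _ (edge_mem_comap G φ f hf)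
    (fun h => hne (Sym2.map.injective φ.injective h))
    ⟨φ x, Sym2.mem_map.mpr ⟨x, hx1, rfl⟩, Sym2.mem_map.mpr ⟨x, hx2, rfl⟩⟩

end Transport

theorem regularization_of_classOne' {β : Type*} [Fintype β]
    (H : SimpleGraph β) (hH : chromIndex H = H.maxDegree) (hHe : H.edgeSet.Nonempty) :
    ∃ (n : ℕ) (Hs : SimpleGraph (Fin n)) (f : β → Fin n),
      Hs.IsRegularOfDegree H.maxDegree ∧
      chromIndex Hs = H.maxDegree ∧
      Function.Injective f ∧
      (∀ u v, H.Adj u v → Hs.Adj (f u) (f v)) ∧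
      (∀ w : Fin n, w ∉ Set.range f → (Hs.neighborSet w ∩ Set.range f).Subsingleton) := by
  classical
  set Δ := H.maxDegree with hΔdef
  obtain ⟨e0, he0⟩ := hHe
  obtain ⟨a0, b0, hadj0⟩ : ∃ a b, H.Adj a b := by
    induction e0 using Sym2.ind with
    | _ a b => exact ⟨a, b, he0⟩
  have hβ : Nonempty β := ⟨a0⟩
  have hpos : 0 < Δ := by
    have h1 : 0 < H.degree a0 := (H.degree_pos_iff_exists_adj a0).mpr ⟨b0, hadj0⟩
    exact lt_of_lt_of_le h1 (H.degree_le_maxDegree a0)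
  have hSne : {n | ∃ c : Sym2 β → Fin n, IsProperEdgeColoring H c}.Nonempty := by
    refine ⟨Fintype.card (Sym2 β), Fintype.equivFin (Sym2 β), ?_⟩
    intro e _ f _ hne _ h
    exact hne ((Fintype.equivFin (Sym2 β)).injective h)
  have hΔmem : ∃ c : Sym2 β → Fin Δ, IsProperEdgeColoring H c := by
    have h := Nat.sInf_mem hSne
    rwa [show sInf {n | ∃ c : Sym2 β → Fin n, IsProperEdgeColoring H c} = Δ from hH] at h
  obtain ⟨c, hcp⟩ := hΔmem
  have hWne : Nonempty (β × (Fin Δ → Bool)) := ⟨(hβ.some, fun _ => false)⟩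
  set n := Fintype.card (β × (Fin Δ → Bool)) with hn
  set φ : Fin n ≃ β × (Fin Δ → Bool) := (Fintype.equivFin (β × (Fin Δ → Bool))).symm with hφ
  set G := RegGraph H c with hG
  set Hs : SimpleGraph (Fin n) := G.comap (φ : Fin n → β × (Fin Δ → Bool)) with hHs
  have hdeg : ∀ v, H.degree v ≤ Δ := fun v => H.degree_le_maxDegree v
  have hreg : Hs.IsRegularOfDegree Δ := by
    intro x
    show (G.comap (φ : Fin n → β × (Fin Δ → Bool))).degree x = Δ
    rw [comap_degree G φ x]
    exact regGraph_degree hcp hdeg (φ x).1 (φ x).2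
  have hnfin : Nonempty (Fin n) := ⟨φ.symm hWne.some⟩
  have hchrom : chromIndex Hs = Δ :=
    chromIndex_eq_of Hs hreg
      ⟨fun e => regColor c hpos (Sym2.map φ e), proper_comap G φ _ (regColor_proper hcp hpos)⟩
  set z : Fin Δ → Bool := fun _ => false with hz
  refine ⟨n, Hs, fun v => φ.symm (v, z), hreg, hchrom, ?_, ?_, ?_⟩
  · intro a b hab
    exact congrArg Prod.fst (φ.symm.injective hab)
  · intro u v huv
    show G.Adj (φ (φ.symm (u, z))) (φ (φ.symm (v, z)))
    rw [Equiv.apply_symm_apply, Equiv.apply_symm_apply]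
    exact Or.inl ⟨huv, rfl⟩
  · intro w hw a ha b hb
    obtain ⟨u1, hu1⟩ := ha.2
    obtain ⟨u2, hu2⟩ := hb.2
    have hadj1 : G.Adj (φ w) (φ a) := ha.1
    have hadj2 : G.Adj (φ w) (φ b) := hb.1
    have hφa : φ a = (u1, z) := by rw [← hu1, Equiv.apply_symm_apply]
    have hφb : φ b = (u2, z) := by rw [← hu2, Equiv.apply_symm_apply]
    have hsz : (φ w).2 ≠ z := by
      intro hzz
      apply hw
      refine ⟨(φ w).1, ?_⟩
      have h5 : ((φ w).1, z) = φ w := Prod.ext rfl hzz.symm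
      show φ.symm ((φ w).1, z) = w
      rw [h5, Equiv.symm_apply_apply]
    have h1 : (φ w).1 = u1 := by
      rcases hadj1 with ⟨_, hs⟩ | ⟨h1, _⟩
      · exact absurd (hs.trans (congrArg Prod.snd hφa)) hsz
      · exact h1.trans (congrArg Prod.fst hφa)
    have h2 : (φ w).1 = u2 := by
      rcases hadj2 with ⟨_, hs⟩ | ⟨h1, _⟩
      · exact absurd (hs.trans (congrArg Prod.snd hφb)) hsz
      · exact h1.trans (congrArg Prod.fst hφb)
    rw [← hu1, ← hu2, ← h1, ← h2]


/-- Every Class 1 graph `H` with at least one edge embeds into a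
`Δ(H)`-regular graph `H*` with `χ'(H*) = Δ(H)`, in which every vertex outside the image
of `H` has at most one neighbor inside the image of `H`. -/
theorem regularization_of_classOne {β : Type*} [Fintype β]
    (H : SimpleGraph β) (hH : IsClassOne H) (hHe : H.edgeSet.Nonempty) :
    ∃ (n : ℕ) (Hs : SimpleGraph (Fin n)) (f : β → Fin n),
      Hs.IsRegularOfDegree H.maxDegree ∧
      chromIndex Hs = H.maxDegree ∧
      Function.Injective f ∧
      (∀ u v, H.Adj u v → Hs.Adj (f u) (f v)) ∧
      (∀ w : Fin n, w ∉ Set.range f → (Hs.neighborSet w ∩ Set.range f).Subsingleton) := by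
  exact regularization_of_classOne' H hH hHe
end
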